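/- arXiv:math/0110141 — 4 statements merged into one kernel-verified Lean document; each statement's English description precedes it below -/
import Mathlib

section
/- Let 0 < ζ₁ < 1 and x₀ ≥ 1, and let f : [1,∞) → ℝ be differentiable with |f′(x)| ≤ ζ₁·x^{1/2} for all x ≥ x₀. Then for every ζ₂ with ζ₁ < ζ₂ < 1 there exists N₀ such that for all N ≥ N₀: |∫₁^N x^{−1/2}·exp(i·((4/3)·x^{3/2} + 2·f(x))) dx| ≤ 2·ζ₂·N^{1/2}. -/
open MeasureTheory Filter

noncomputable section

/-- Stationary-phase bound: if `|f'(x)| ≤ ζ₁ x^{1/2}` for large `x` with `ζ₁ < 1`, then for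
every `ζ₁ < ζ₂ < 1` one eventually has
`|∫₁^N x^{-1/2} exp(i((4/3)x^{3/2} + 2 f(x))) dx| ≤ 2 ζ₂ N^{1/2}`. -/
theorem stmt_5 (ζ₁ : ℝ) (hζ₁pos : 0 < ζ₁) (hζ₁lt : ζ₁ < 1)
    (x₀ : ℝ) (hx₀ : 1 ≤ x₀)
    (f f' : ℝ → ℝ)
    (hderiv : ∀ x ≥ (1:ℝ), HasDerivAt f (f' x) x)
    (hbound : ∀ x ≥ x₀, |f' x| ≤ ζ₁ * x ^ ((1:ℝ)/2)) :
    ∀ ζ₂ : ℝ, ζ₁ < ζ₂ → ζ₂ < 1 →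
      ∃ N₀ : ℝ, ∀ N ≥ N₀,
        ‖∫ x in (1:ℝ)..N, ((x ^ (-(1:ℝ)/2) : ℝ) : ℂ) *
            Complex.exp (Complex.I * (((4/3) * x ^ ((3:ℝ)/2) + 2 * f x : ℝ) : ℂ))‖
          ≤ 2 * ζ₂ * N ^ ((1:ℝ)/2) := by
  intro ζ₂ h12 h21
  set δ : ℝ := ζ₂ - ζ₁ with hδ
  have hδpos : 0 < δ := by simp only [hδ]; linarith
  set F : ℝ → ℝ := deriv f with hFdef
  have hFm : Measurable F := measurable_deriv f
  have hFeq : ∀ x ≥ (1:ℝ), F x = f' x := fun x hx => (hderiv x hx).deriv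
  have hFb : ∀ x ≥ x₀, |F x| ≤ ζ₁ * x ^ ((1:ℝ)/2) := fun x hx => by
    rw [hFeq x (le_trans hx₀ hx)]; exact hbound x hx
  set φ : ℝ → ℝ := fun x => (4/3) * x ^ ((3:ℝ)/2) + 2 * f x with hφdef
  set E : ℝ → ℂ := fun x => Complex.exp (Complex.I * (φ x : ℂ)) with hEdef
  set A : ℝ → ℂ := fun x => ((x ^ (-(1:ℝ)/2) : ℝ) : ℂ) * E x with hAdef
  set G : ℝ → ℂ := fun x => -Complex.I/2 * (E x / (x:ℂ)) with hGdef
  set p2 : ℝ → ℂ := fun x => Complex.I/2 * (E x / (x:ℂ)^2) with hp2def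
  set p3 : ℝ → ℂ := fun x => ((-F x / x : ℝ) : ℂ) * E x with hp3def
  have hnormE : ∀ x : ℝ, ‖E x‖ = 1 := by
    intro x
    simp [hEdef, Complex.norm_exp, mul_comm]
  have hφd : ∀ x ≥ (1:ℝ), HasDerivAt φ (2 * x ^ ((1:ℝ)/2) + 2 * F x) x := by
    intro x hx
    have hx0 : (0:ℝ) < x := lt_of_lt_of_le one_pos hx
    have h1 : HasDerivAt (fun y : ℝ => y ^ ((3:ℝ)/2)) ((3/2) * x ^ ((3:ℝ)/2 - 1)) x :=
      Real.hasDerivAt_rpow_const (Or.inl (ne_of_gt hx0))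
    have h2 : HasDerivAt φ _ x := (h1.const_mul ((4:ℝ)/3)).add ((hderiv x hx).const_mul 2)
    convert h2 using 1
    rw [show (3:ℝ)/2 - 1 = 1/2 by norm_num, hFeq x hx]
    ring
  have hEd : ∀ x ≥ (1:ℝ), HasDerivAt E
      (Complex.I * ((2 * x ^ ((1:ℝ)/2) + 2 * F x : ℝ):ℂ) * E x) x := by
    intro x hx
    have := (((hφd x hx).ofReal_comp).const_mul Complex.I).cexp
    convert this using 1
    ring
  have hEc : ∀ x ≥ (1:ℝ), ContinuousAt E x := fun x hx => (hEd x hx).continuousAt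
  have hAc : ∀ x ≥ (1:ℝ), ContinuousAt A x := by
    intro x hx
    have hx0 : (0:ℝ) < x := lt_of_lt_of_le one_pos hx
    have h1 : ContinuousAt (fun y : ℝ => y ^ (-(1:ℝ)/2)) x :=
      Real.continuousAt_rpow_const x _ (Or.inl (ne_of_gt hx0))
    exact (Complex.continuous_ofReal.continuousAt.comp h1).mul (hEc x hx)
  have hAint : ∀ a b : ℝ, 1 ≤ a → 1 ≤ b → IntervalIntegrable A volume a b := by
    intro a b ha hb
    apply ContinuousOn.intervalIntegrable
    intro x hx
    exact (hAc x (le_trans (le_min ha hb) hx.1)).continuousWithinAt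
  -- derivative of G
  have hGd : ∀ x ≥ (1:ℝ), HasDerivAt G (A x - (p3 x - p2 x)) x := by
    intro x hx
    have hx0 : (0:ℝ) < x := lt_of_lt_of_le one_pos hx
    have hxC : (x:ℂ) ≠ 0 := by exact_mod_cast (ne_of_gt hx0)
    have hid : HasDerivAt (fun y:ℝ => (y:ℂ)) 1 x := by
      simpa using (hasDerivAt_id x).ofReal_comp
    have hdiv : HasDerivAt G _ x := ((hEd x hx).div hid hxC).const_mul (-Complex.I/2)
    convert hdiv using 1
    have hu2 : ((x ^ ((1:ℝ)/2) : ℝ) : ℂ) * ((x ^ ((1:ℝ)/2) : ℝ) : ℂ) = (x:ℂ) := by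
      rw [← Complex.ofReal_mul, ← Real.rpow_add hx0]
      norm_num
    have hu0 : ((x ^ ((1:ℝ)/2) : ℝ) : ℂ) ≠ 0 := by
      simp only [ne_eq, Complex.ofReal_eq_zero]
      exact ne_of_gt (Real.rpow_pos_of_pos hx0 _)
    have hinv : ((x ^ (-(1:ℝ)/2) : ℝ) : ℂ) = ((x ^ ((1:ℝ)/2) : ℝ) : ℂ)⁻¹ := by
      rw [show -(1:ℝ)/2 = -((1:ℝ)/2) by norm_num, Real.rpow_neg hx0.le]
      push_cast
      ring
    simp only [hAdef, hp2def, hp3def, hinv]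
    push_cast
    rw [← hu2]
    set u : ℂ := ((x ^ ((1:ℝ)/2) : ℝ) : ℂ) with hudef
    set e : ℂ := E x with hedef
    set b : ℂ := ((F x : ℝ) : ℂ) with hbdef
    have hI : Complex.I ^ 2 = -1 := Complex.I_sq
    have h4 : (u*u)^2 ≠ 0 := pow_ne_zero _ (mul_ne_zero hu0 hu0)
    refine mul_right_cancel₀ h4 ?_
    field_simp [hu0]
    ring_nf
    linear_combination ((2:ℂ)*e*u^2*b + 2*e*u^3) * hI
  -- choose N₀
  refine ⟨max x₀ (((x₀+1)/(2*δ))^2), fun N hN => ?_⟩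
  have hNx₀ : x₀ ≤ N := le_trans (le_max_left _ _) hN
  have hN1 : (1:ℝ) ≤ N := le_trans hx₀ hNx₀
  have hN0 : (0:ℝ) < N := lt_of_lt_of_le one_pos hN1
  have hx₀0 : (0:ℝ) < x₀ := lt_of_lt_of_le one_pos hx₀
  -- integrability of p2 and p3 on [x₀, N]
  have hp2int : IntervalIntegrable p2 volume x₀ N := by
    apply ContinuousOn.intervalIntegrable
    intro x hx
    have hx1 : (1:ℝ) ≤ x := le_trans (le_min hx₀ hN1) hx.1
    have hx0 : (0:ℝ) < x := lt_of_lt_of_le one_pos hx1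
    have hxC : ((x:ℝ):ℂ) ≠ 0 := by exact_mod_cast (ne_of_gt hx0)
    exact (continuousAt_const.mul ((hEc x hx1).div
      ((Complex.continuous_ofReal.continuousAt).pow 2) (pow_ne_zero 2 hxC))).continuousWithinAt
  have hEsm : AEStronglyMeasurable E (volume.restrict (Set.uIoc x₀ N)) := by
    apply ContinuousOn.aestronglyMeasurable _ measurableSet_uIoc
    intro x hx
    rw [Set.uIoc_of_le hNx₀] at hx
    exact (hEc x (le_trans hx₀ hx.1.le)).continuousWithinAt
  have hp3int : IntervalIntegrable p3 volume x₀ N := by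
    rw [intervalIntegrable_iff]
    apply Integrable.mono' (g := fun _ => ζ₁ * N ^ ((1:ℝ)/2))
    · exact integrableOn_const
        (by rw [Set.uIoc_of_le hNx₀]; exact measure_Ioc_lt_top.ne)
    · exact ((Complex.measurable_ofReal.comp
        ((hFm.neg).div measurable_id)).aestronglyMeasurable).mul hEsm
    · rw [Set.uIoc_of_le hNx₀]
      filter_upwards [ae_restrict_mem measurableSet_Ioc] with x hx
      have hxx₀ : x₀ ≤ x := hx.1.le
      have hx1 : (1:ℝ) ≤ x := le_trans hx₀ hxx₀
      have hx0 : (0:ℝ) < x := lt_of_lt_of_le one_pos hx1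
      have : ‖p3 x‖ = |F x| / x := by
        simp only [hp3def]
        rw [norm_mul, hnormE, mul_one, Complex.norm_real, Real.norm_eq_abs,
          abs_div, abs_neg, abs_of_pos hx0]
      rw [this]
      calc |F x| / x ≤ |F x| := div_le_self (abs_nonneg _) hx1
        _ ≤ ζ₁ * x ^ ((1:ℝ)/2) := hFb x hxx₀
        _ ≤ ζ₁ * N ^ ((1:ℝ)/2) := by
            apply mul_le_mul_of_nonneg_left _ hζ₁pos.le
            exact Real.rpow_le_rpow hx0.le hx.2 (by norm_num)
  -- FTC on [x₀, N]
  have huIcc : Set.uIcc x₀ N = Set.Icc x₀ N := Set.uIcc_of_le hNx₀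
  have hftc : ∫ x in x₀..N, (A x - (p3 x - p2 x)) = G N - G x₀ := by
    apply intervalIntegral.integral_eq_sub_of_hasDerivAt
    · intro x hx
      rw [huIcc] at hx
      exact hGd x (le_trans hx₀ hx.1)
    · exact (hAint x₀ N hx₀ hN1).sub (hp3int.sub hp2int)
  have hsplitA : ∫ x in x₀..N, A x
      = (G N - G x₀) + ∫ x in x₀..N, (p3 x - p2 x) := by
    refine eq_add_of_sub_eq ?_
    rw [← intervalIntegral.integral_sub (hAint x₀ N hx₀ hN1) (hp3int.sub hp2int)]
    exact hftc
  have hGnorm : ∀ x : ℝ, 1 ≤ x → ‖G x‖ ≤ 1/2 := by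
    intro x hx
    have hx0 : (0:ℝ) < x := lt_of_lt_of_le one_pos hx
    have hI2 : ‖(-Complex.I/2 : ℂ)‖ = 1/2 := by simp
    have hxn : ‖((x:ℝ):ℂ)‖ = x := by
      rw [Complex.norm_real, Real.norm_eq_abs, abs_of_pos hx0]
    have heq : ‖G x‖ = 1/2 * (1/x) := by
      simp only [hGdef]
      rw [norm_mul, hI2, norm_div, hnormE, hxn]
    rw [heq]
    have hinv : 1/x ≤ 1 := by rw [div_le_one hx0]; exact hx
    linarith
  have hGb : ‖G N - G x₀‖ ≤ 1 :=
    le_trans (norm_sub_le _ _) (by linarith [hGnorm N hN1, hGnorm x₀ hx₀])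
  -- bound on ∫ p2
  have hp2b : ‖∫ x in x₀..N, p2 x‖ ≤ 1/2 := by
    have hgint : IntervalIntegrable (fun x : ℝ => 1/2 * (x^2)⁻¹) volume x₀ N := by
      apply ContinuousOn.intervalIntegrable
      intro x hx
      rw [huIcc] at hx
      have hx0 : (0:ℝ) < x := lt_of_lt_of_le hx₀0 hx.1
      exact (continuousAt_const.mul
        ((continuousAt_id.pow 2).inv₀ (pow_ne_zero 2 hx0.ne'))).continuousWithinAt
    have hψ : ∀ x ∈ Set.uIcc x₀ N, HasDerivAt (fun y : ℝ => -(1/2) * y⁻¹) (1/2 * (x^2)⁻¹) x := by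
      intro x hx
      rw [huIcc] at hx
      have hx0 : (0:ℝ) < x := lt_of_lt_of_le hx₀0 hx.1
      have : HasDerivAt (fun y : ℝ => -(1/2) * y⁻¹) _ x := (hasDerivAt_inv (ne_of_gt hx0)).const_mul (-(1/2 : ℝ))
      convert this using 1
      field_simp
    have hint : ∫ x in x₀..N, (1/2 * (x^2)⁻¹) = -(1/2)*N⁻¹ - (-(1/2)*x₀⁻¹) :=
      intervalIntegral.integral_eq_sub_of_hasDerivAt hψ hgint
    have hb : ‖∫ x in x₀..N, p2 x‖ ≤ |∫ x in x₀..N, (1/2 * (x^2)⁻¹)| := by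
      apply intervalIntegral.norm_integral_le_abs_of_norm_le _ hgint
      filter_upwards [ae_restrict_mem measurableSet_uIoc] with x hx
      rw [Set.uIoc_of_le hNx₀] at hx
      have hx0 : (0:ℝ) < x := lt_of_lt_of_le hx₀0 hx.1.le
      have hI2 : ‖(Complex.I/2 : ℂ)‖ = 1/2 := by simp
      have hxn : ‖((x:ℝ):ℂ)^2‖ = x^2 := by
        rw [norm_pow, Complex.norm_real, Real.norm_eq_abs, abs_of_pos hx0]
      have heq : ‖p2 x‖ = 1/2 * (x^2)⁻¹ := by
        simp only [hp2def]
        rw [norm_mul, hI2, norm_div, hnormE, hxn, one_div, mul_comm]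
        ring
      rw [heq]
    rw [hint] at hb
    have hi1 : N⁻¹ ≤ x₀⁻¹ := by
      apply inv_anti₀ hx₀0 hNx₀
    have hi2 : x₀⁻¹ ≤ 1 := by
      have := (div_le_one hx₀0).mpr hx₀
      rwa [one_div] at this
    have hi3 : (0:ℝ) < N⁻¹ := by positivity
    have habs : |(-(1/2)*N⁻¹ - (-(1/2)*x₀⁻¹))| ≤ 1/2 := by
      rw [abs_le]
      constructor <;> nlinarith
    linarith
  -- bound on ∫ p3
  have hp3b : ‖∫ x in x₀..N, p3 x‖ ≤ 2*ζ₁*N^((1:ℝ)/2) := by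
    have hgint : IntervalIntegrable (fun x : ℝ => ζ₁ * x ^ (-(1:ℝ)/2)) volume x₀ N := by
      apply ContinuousOn.intervalIntegrable
      intro x hx
      rw [huIcc] at hx
      have hx0 : (0:ℝ) < x := lt_of_lt_of_le hx₀0 hx.1
      exact (continuousAt_const.mul
        (Real.continuousAt_rpow_const x _ (Or.inl (ne_of_gt hx0)))).continuousWithinAt
    have hΨ : ∀ x ∈ Set.uIcc x₀ N,
        HasDerivAt (fun y : ℝ => 2*ζ₁*y^((1:ℝ)/2)) (ζ₁ * x ^ (-(1:ℝ)/2)) x := by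
      intro x hx
      rw [huIcc] at hx
      have hx0 : (0:ℝ) < x := lt_of_lt_of_le hx₀0 hx.1
      have : HasDerivAt (fun y : ℝ => 2*ζ₁*y^((1:ℝ)/2)) _ x := (Real.hasDerivAt_rpow_const
        (x := x) (p := (1:ℝ)/2) (Or.inl (ne_of_gt hx0))).const_mul (2*ζ₁)
      convert this using 1
      rw [show (1:ℝ)/2 - 1 = -1/2 by norm_num]
      ring
    have hint : ∫ x in x₀..N, (ζ₁ * x ^ (-(1:ℝ)/2))
        = 2*ζ₁*N^((1:ℝ)/2) - 2*ζ₁*x₀^((1:ℝ)/2) :=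
      intervalIntegral.integral_eq_sub_of_hasDerivAt hΨ hgint
    have hb : ‖∫ x in x₀..N, p3 x‖ ≤ |∫ x in x₀..N, (ζ₁ * x ^ (-(1:ℝ)/2))| := by
      apply intervalIntegral.norm_integral_le_abs_of_norm_le _ hgint
      filter_upwards [ae_restrict_mem measurableSet_uIoc] with x hx
      rw [Set.uIoc_of_le hNx₀] at hx
      have hxx₀ : x₀ ≤ x := hx.1.le
      have hx0 : (0:ℝ) < x := lt_of_lt_of_le hx₀0 hxx₀
      have heq : ‖p3 x‖ = |F x| / x := by
        simp only [hp3def]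
        rw [norm_mul, hnormE, mul_one, Complex.norm_real, Real.norm_eq_abs,
          abs_div, abs_neg, abs_of_pos hx0]
      rw [heq]
      have hrw : x ^ ((1:ℝ)/2) / x = x ^ (-(1:ℝ)/2) := by
        rw [show -(1:ℝ)/2 = (1:ℝ)/2 - 1 by norm_num, Real.rpow_sub hx0, Real.rpow_one]
      calc |F x| / x ≤ (ζ₁ * x ^ ((1:ℝ)/2)) / x := by
            gcongr
            exact hFb x hxx₀
        _ = ζ₁ * x ^ (-(1:ℝ)/2) := by rw [mul_div_assoc, hrw]
    rw [hint] at hb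
    have hmono : x₀^((1:ℝ)/2) ≤ N^((1:ℝ)/2) :=
      Real.rpow_le_rpow hx₀0.le hNx₀ (by norm_num)
    have hnn : (0:ℝ) ≤ 2*ζ₁*x₀^((1:ℝ)/2) := by positivity
    have hmono2 : 2*ζ₁*x₀^((1:ℝ)/2) ≤ 2*ζ₁*N^((1:ℝ)/2) :=
      mul_le_mul_of_nonneg_left hmono (by positivity)
    rw [abs_of_nonneg (by linarith)] at hb
    linarith
  -- piece on [1, x₀]
  have h1x₀ : ‖∫ x in (1:ℝ)..x₀, A x‖ ≤ x₀ - 1 := by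
    have hc := intervalIntegral.norm_integral_le_of_norm_le_const (C := 1) (f := A)
      (a := 1) (b := x₀) ?_
    · rwa [abs_of_nonneg (by linarith), one_mul] at hc
    · intro x hx
      rw [Set.uIoc_of_le hx₀] at hx
      have hx1 : (1:ℝ) ≤ x := hx.1.le
      have hx0 : (0:ℝ) < x := lt_of_lt_of_le one_pos hx1
      have heq : ‖A x‖ = x ^ (-(1:ℝ)/2) := by
        simp only [hAdef]
        rw [norm_mul, hnormE, mul_one, Complex.norm_real, Real.norm_eq_abs,
          abs_of_nonneg (Real.rpow_nonneg hx0.le _)]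
      rw [heq]
      exact Real.rpow_le_one_of_one_le_of_nonpos hx1 (by norm_num)
  -- assemble
  have hsplit : ∫ x in (1:ℝ)..N, A x = (∫ x in (1:ℝ)..x₀, A x) + ∫ x in x₀..N, A x :=
    (intervalIntegral.integral_add_adjacent_intervals
      (hAint 1 x₀ le_rfl hx₀) (hAint x₀ N hx₀ hN1)).symm
  have hsub : ∫ x in x₀..N, (p3 x - p2 x)
      = (∫ x in x₀..N, p3 x) - ∫ x in x₀..N, p2 x :=
    intervalIntegral.integral_sub hp3int hp2int
  have hmid : ‖∫ x in x₀..N, A x‖ ≤ 1 + (2*ζ₁*N^((1:ℝ)/2) + 1/2) := by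
    rw [hsplitA, hsub]
    calc ‖(G N - G x₀) + ((∫ x in x₀..N, p3 x) - ∫ x in x₀..N, p2 x)‖
        ≤ ‖G N - G x₀‖ + ‖(∫ x in x₀..N, p3 x) - ∫ x in x₀..N, p2 x‖ := norm_add_le _ _
      _ ≤ ‖G N - G x₀‖ + (‖∫ x in x₀..N, p3 x‖ + ‖∫ x in x₀..N, p2 x‖) := by
          have := norm_sub_le (∫ x in x₀..N, p3 x) (∫ x in x₀..N, p2 x)
          linarith
      _ ≤ 1 + (2*ζ₁*N^((1:ℝ)/2) + 1/2) := by linarith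
  have hmain : ‖∫ x in (1:ℝ)..N, A x‖ ≤ x₀ + 1/2 + 2*ζ₁*N^((1:ℝ)/2) := by
    rw [hsplit]
    calc ‖(∫ x in (1:ℝ)..x₀, A x) + ∫ x in x₀..N, A x‖
        ≤ ‖∫ x in (1:ℝ)..x₀, A x‖ + ‖∫ x in x₀..N, A x‖ := norm_add_le _ _
      _ ≤ x₀ + 1/2 + 2*ζ₁*N^((1:ℝ)/2) := by linarith
  -- sqrt bound
  have hsq : (x₀+1)/(2*δ) ≤ N ^ ((1:ℝ)/2) := by
    rw [← Real.sqrt_eq_rpow]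
    apply (Real.le_sqrt (by positivity) hN0.le).mpr
    calc ((x₀+1)/(2*δ))^2 ≤ max x₀ (((x₀+1)/(2*δ))^2) := le_max_right _ _
      _ ≤ N := hN
  have h2δ : x₀ + 1 ≤ 2*δ*N^((1:ℝ)/2) := by
    have h := mul_le_mul_of_nonneg_left hsq (by positivity : (0:ℝ) ≤ 2*δ)
    have heq : 2*δ*((x₀+1)/(2*δ)) = x₀+1 := by field_simp
    linarith [heq ▸ h]
  have hexp : 2*ζ₂*N^((1:ℝ)/2) = 2*ζ₁*N^((1:ℝ)/2) + 2*δ*N^((1:ℝ)/2) := by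
    rw [hδ]; ring
  show ‖∫ x in (1:ℝ)..N, A x‖ ≤ 2 * ζ₂ * N ^ ((1:ℝ)/2)
  linarith
end
end

section
/- For every x > 0 the improper integral ∫_x^∞ t^{−1/2}·exp(i·(4/3)·t^{3/2}) dt converges (as the limit of ∫_x^N as N → ∞), and there is a constant C such that for all x ≥ 1: |∫_x^∞ t^{−1/2}·exp(i·(4/3)·t^{3/2}) dt − (i/2)·x^{−1}·exp(i·(4/3)·x^{3/2})| ≤ C·x^{−5/2}. In particular ∫_x^∞ t^{−1/2}·exp(i·(4/3)·t^{3/2}) dt = (i/2)·x^{−1}·exp(i·(4/3)·x^{3/2})·(1 + o(1)) as x → +∞. -/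
open MeasureTheory Filter

noncomputable section

namespace Stmt6

def E (t : ℝ) : ℂ := Complex.exp (Complex.I * (((4/3) * t ^ ((3:ℝ)/2) : ℝ) : ℂ))

lemma E_cont : Continuous E := by
  apply Complex.continuous_exp.comp
  exact continuous_const.mul (Complex.continuous_ofReal.comp
    (continuous_const.mul (Real.continuous_rpow_const (by norm_num))))

lemma norm_E (t : ℝ) : ‖E t‖ = 1 := by
  simp [E, Complex.norm_exp]

lemma hE_deriv (t : ℝ) (ht : 0 < t) :
    HasDerivAt E (2 * Complex.I * ((t ^ ((1:ℝ)/2) : ℝ) : ℂ) * E t) t := by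
  have h1 : HasDerivAt (fun t : ℝ => (4/3) * t ^ ((3:ℝ)/2)) (2 * t ^ ((1:ℝ)/2)) t := by
    have := (Real.hasDerivAt_rpow_const (p := (3:ℝ)/2) (Or.inl ht.ne')).const_mul ((4:ℝ)/3)
    convert this using 1
    · rfl
    · rfl
    rw [show (3:ℝ)/2 - 1 = 1/2 by norm_num]; ring
  have h2 := (h1.ofReal_comp.const_mul Complex.I).cexp
  convert h2 using 1
  · rfl
  simp only [E]
  rw [show ((2 * t ^ ((1:ℝ)/2) : ℝ) : ℂ) = 2 * ((t ^ ((1:ℝ)/2) : ℝ) : ℂ) by push_cast; ring]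
  ring

lemma abs_E (t : ℝ) : ‖E t‖ = 1 := by
  exact norm_E t

lemma contOn (r : ℝ) {s : Set ℝ} (hs : ∀ t ∈ s, t ≠ 0) :
    ContinuousOn (fun t : ℝ => ((t ^ r : ℝ) : ℂ) * E t) s := by
  apply ContinuousOn.mul _ E_cont.continuousOn
  exact Complex.continuous_ofReal.comp_continuousOn
    (ContinuousOn.rpow_const continuousOn_id (fun t ht => Or.inl (hs t ht)))

lemma intInt (r : ℝ) {x N : ℝ} (hx : 0 < x) (hxN : x ≤ N) :
    IntervalIntegrable (fun t : ℝ => ((t ^ r : ℝ) : ℂ) * E t) volume x N := by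
  apply (contOn r (fun t ht => ?_)).intervalIntegrable
  rw [Set.uIcc_of_le hxN] at ht
  exact (lt_of_lt_of_le hx ht.1).ne'

def G (t : ℝ) : ℂ := -(Complex.I/2) * ((t⁻¹ : ℝ) : ℂ) * E t
def H (t : ℝ) : ℂ := -(Complex.I/2) * ((t ^ (-(5:ℝ)/2) : ℝ) : ℂ) * E t

lemma hG_deriv (t : ℝ) (ht : 0 < t) :
    HasDerivAt G (((t ^ (-(1:ℝ)/2) : ℝ) : ℂ) * E t
      + (Complex.I/2) * ((t ^ (-(2:ℝ)) : ℝ) : ℂ) * E t) t := by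
  have hinv : HasDerivAt (fun t : ℝ => ((t⁻¹ : ℝ) : ℂ)) ((-(t^2)⁻¹ : ℝ) : ℂ) t :=
    (hasDerivAt_inv ht.ne').ofReal_comp
  have h := (hinv.mul (hE_deriv t ht)).const_mul (-(Complex.I/2))
  convert h using 1
  · rfl
  · funext y; simp [G, mul_assoc]
  have e1 : (t : ℝ) ^ (-(1:ℝ)/2) = t ^ ((1:ℝ)/2) * t⁻¹ := by
    rw [show (-(1:ℝ)/2) = 1/2 - 1 by norm_num, Real.rpow_sub ht, Real.rpow_one]; ring
  have e2 : (t : ℝ) ^ (-(2:ℝ)) = (t^2)⁻¹ := by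
    rw [show (-(2:ℝ)) = -(2:ℕ) by norm_num, Real.rpow_neg ht.le, Real.rpow_natCast]
  rw [e1, e2]
  push_cast
  linear_combination (((t ^ ((1:ℝ)/2) : ℝ) : ℂ) * ((t : ℂ))⁻¹ * E t) * Complex.I_sq

lemma hH_deriv (t : ℝ) (ht : 0 < t) :
    HasDerivAt H ((5/4) * Complex.I * ((t ^ (-(7:ℝ)/2) : ℝ) : ℂ) * E t
      + ((t ^ (-(2:ℝ)) : ℝ) : ℂ) * E t) t := by
  have hp : HasDerivAt (fun t : ℝ => ((t ^ (-(5:ℝ)/2) : ℝ) : ℂ))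
      (((-(5:ℝ)/2 * t ^ (-(7:ℝ)/2) : ℝ) : ℂ)) t := by
    have := (Real.hasDerivAt_rpow_const (p := -(5:ℝ)/2) (Or.inl ht.ne')).ofReal_comp
    convert this using 2
    norm_num
  have h := (hp.mul (hE_deriv t ht)).const_mul (-(Complex.I/2))
  convert h using 1
  · rfl
  · funext y; simp [H, mul_assoc]
  have e3 : (t : ℝ) ^ (-(2:ℝ)) = t ^ (-(5:ℝ)/2) * t ^ ((1:ℝ)/2) := by
    rw [← Real.rpow_add ht]; norm_num
  rw [e3]
  push_cast
  linear_combination (((t ^ (-(5:ℝ)/2) : ℝ) : ℂ) * ((t ^ ((1:ℝ)/2) : ℝ) : ℂ) * E t) * Complex.I_sq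

lemma eq1 {x N : ℝ} (hx : 0 < x) (hxN : x ≤ N) :
    (∫ t in x..N, ((t ^ (-(1:ℝ)/2) : ℝ) : ℂ) * E t)
      = G N - G x - (Complex.I/2) * ∫ t in x..N, ((t ^ (-(2:ℝ)) : ℝ) : ℂ) * E t := by
  have hI1 := intInt (-(1:ℝ)/2) hx hxN
  have hI2 := intInt (-(2:ℝ)) hx hxN
  have hftc := intervalIntegral.integral_eq_sub_of_hasDerivAt
    (f := G) (f' := fun t => ((t ^ (-(1:ℝ)/2) : ℝ) : ℂ) * E t
      + (Complex.I/2) * (((t ^ (-(2:ℝ)) : ℝ) : ℂ) * E t))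
    (fun t ht => by
      rw [Set.uIcc_of_le hxN] at ht
      have := hG_deriv t (lt_of_lt_of_le hx ht.1)
      convert this using 1; rfl; ring)
    (hI1.add (hI2.const_mul _))
  rw [intervalIntegral.integral_add hI1 (hI2.const_mul _),
    intervalIntegral.integral_const_mul] at hftc
  linear_combination hftc

lemma eq2 {x N : ℝ} (hx : 0 < x) (hxN : x ≤ N) :
    (∫ t in x..N, ((t ^ (-(2:ℝ)) : ℝ) : ℂ) * E t)
      = H N - H x - (5/4) * Complex.I * ∫ t in x..N, ((t ^ (-(7:ℝ)/2) : ℝ) : ℂ) * E t := by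
  have hI1 := intInt (-(2:ℝ)) hx hxN
  have hI2 := intInt (-(7:ℝ)/2) hx hxN
  have hftc := intervalIntegral.integral_eq_sub_of_hasDerivAt
    (f := H) (f' := fun t => ((t ^ (-(2:ℝ)) : ℝ) : ℂ) * E t
      + ((5/4) * Complex.I) * (((t ^ (-(7:ℝ)/2) : ℝ) : ℂ) * E t))
    (fun t ht => by
      rw [Set.uIcc_of_le hxN] at ht
      have := hH_deriv t (lt_of_lt_of_le hx ht.1)
      convert this using 1; rfl; ring)
    (hI1.add (hI2.const_mul _))
  rw [intervalIntegral.integral_add hI1 (hI2.const_mul _),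
    intervalIntegral.integral_const_mul] at hftc
  linear_combination hftc

lemma norm_H {t : ℝ} (ht : 0 < t) : ‖H t‖ = (1/2) * t ^ (-(5:ℝ)/2) := by
  have : (0:ℝ) < t ^ (-(5:ℝ)/2) := Real.rpow_pos_of_pos ht _
  simp [H, norm_mul, abs_E, abs_of_pos this]
  try ring

lemma Jbound {x N : ℝ} (hx : 1 ≤ x) (hxN : x ≤ N) :
    ‖∫ t in x..N, ((t ^ (-(2:ℝ)) : ℝ) : ℂ) * E t‖ ≤ (3/2) * x ^ (-(5:ℝ)/2) := by
  have hx0 : (0:ℝ) < x := lt_of_lt_of_le one_pos hx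
  have hN0 : (0:ℝ) < N := lt_of_lt_of_le hx0 hxN
  rw [eq2 hx0 hxN]
  have h1 : ‖∫ t in x..N, ((t ^ (-(7:ℝ)/2) : ℝ) : ℂ) * E t‖
      ≤ (2/5) * x ^ (-(5:ℝ)/2) := by
    calc ‖∫ t in x..N, ((t ^ (-(7:ℝ)/2) : ℝ) : ℂ) * E t‖
        ≤ ∫ t in x..N, ‖((t ^ (-(7:ℝ)/2) : ℝ) : ℂ) * E t‖ :=
          intervalIntegral.norm_integral_le_integral_norm hxN
      _ = ∫ t in x..N, t ^ (-(7:ℝ)/2) := by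
          apply intervalIntegral.integral_congr
          intro t ht
          rw [Set.uIcc_of_le hxN] at ht
          have ht0 : (0:ℝ) < t := lt_of_lt_of_le hx0 ht.1
          simp [norm_mul, abs_E,
            abs_of_pos (Real.rpow_pos_of_pos ht0 (-(7:ℝ)/2))]
      _ = (N ^ (-(7:ℝ)/2 + 1) - x ^ (-(7:ℝ)/2 + 1)) / (-(7:ℝ)/2 + 1) := by
          rw [integral_rpow]
          right
          constructor
          · norm_num
          · rw [Set.uIcc_of_le hxN]
            intro h; exact absurd h.1 (by linarith)
      _ ≤ (2/5) * x ^ (-(5:ℝ)/2) := by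
          rw [show (-(7:ℝ)/2 + 1) = -(5:ℝ)/2 by norm_num]
          have hNpos : (0:ℝ) ≤ N ^ (-(5:ℝ)/2) := (Real.rpow_pos_of_pos hN0 _).le
          rw [div_le_iff_of_neg (by norm_num : (-(5:ℝ)/2) < (0:ℝ))]
          nlinarith [Real.rpow_pos_of_pos hx0 (-(5:ℝ)/2)]
  have hNx : N ^ (-(5:ℝ)/2) ≤ x ^ (-(5:ℝ)/2) :=
    Real.rpow_le_rpow_of_nonpos hx0 hxN (by norm_num)
  calc ‖H N - H x - 5 / 4 * Complex.I * ∫ t in x..N, ((t ^ (-(7:ℝ)/2) : ℝ) : ℂ) * E t‖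
      ≤ ‖H N - H x‖ + ‖5 / 4 * Complex.I * ∫ t in x..N, ((t ^ (-(7:ℝ)/2):ℝ):ℂ) * E t‖ :=
        norm_sub_le _ _
    _ ≤ (‖H N‖ + ‖H x‖) + (5/4) * ‖∫ t in x..N, ((t ^ (-(7:ℝ)/2):ℝ):ℂ) * E t‖ := by
        gcongr
        · exact norm_sub_le _ _
        · rw [norm_mul]
          simp
    _ ≤ ((1/2) * x ^ (-(5:ℝ)/2) + (1/2) * x ^ (-(5:ℝ)/2)) + (5/4) * ((2/5) * x ^ (-(5:ℝ)/2)) := by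
        gcongr ?_ + ?_
        · rw [norm_H hN0, norm_H hx0]
          gcongr ?_ + ?_ <;> linarith
        · linarith [h1]
    _ = (3/2) * x ^ (-(5:ℝ)/2) := by ring

lemma hInt2 {x : ℝ} (hx : 0 < x) :
    IntegrableOn (fun t : ℝ => ((t ^ (-(2:ℝ)) : ℝ) : ℂ) * E t) (Set.Ioi x) := by
  apply Integrable.mono' (integrableOn_Ioi_rpow_of_lt (by norm_num : (-2:ℝ) < -1) hx)
  · exact (contOn (-(2:ℝ)) (s := Set.Ioi x) (fun t ht => (lt_trans hx ht).ne')
      ).aestronglyMeasurable measurableSet_Ioi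
  · filter_upwards [ae_restrict_mem measurableSet_Ioi] with t ht
    have ht0 : (0:ℝ) < t := lt_trans hx ht
    rw [norm_mul, norm_E, mul_one, Complex.norm_real,
      Real.norm_eq_abs, abs_of_pos (Real.rpow_pos_of_pos ht0 _)]

def J (x : ℝ) : ℂ := ∫ t in Set.Ioi x, ((t ^ (-(2:ℝ)) : ℝ) : ℂ) * E t
def Ifun (x : ℝ) : ℂ := -G x - (Complex.I/2) * J x

lemma part1 {x : ℝ} (hx : 0 < x) :
    Tendsto (fun N : ℝ => ∫ t in x..N, ((t ^ (-(1:ℝ)/2) : ℝ) : ℂ) * E t)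
      atTop (nhds (Ifun x)) := by
  have hG0 : Tendsto G atTop (nhds 0) := by
    apply squeeze_zero_norm' (a := fun N : ℝ => N⁻¹)
    · filter_upwards [eventually_gt_atTop 0] with N hN
      rw [show G N = -(Complex.I/2) * ((N⁻¹ : ℝ) : ℂ) * E N from rfl,
        norm_mul, norm_E, mul_one, norm_mul, Complex.norm_real, Real.norm_eq_abs,
        abs_of_pos (inv_pos.mpr hN)]
      have : ‖-(Complex.I/2)‖ = 1/2 := by simp
      rw [this]
      nlinarith [inv_pos.mpr hN]
    · exact tendsto_inv_atTop_zero
  have hJt : Tendsto (fun N : ℝ => ∫ t in x..N, ((t ^ (-(2:ℝ)) : ℝ) : ℂ) * E t)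
      atTop (nhds (J x)) :=
    intervalIntegral_tendsto_integral_Ioi x (hInt2 hx) tendsto_id
  have hlim : Tendsto (fun N : ℝ => G N - G x - (Complex.I/2) *
      ∫ t in x..N, ((t ^ (-(2:ℝ)) : ℝ) : ℂ) * E t) atTop (nhds (Ifun x)) := by
    have := (hG0.sub (tendsto_const_nhds (x := G x))).sub (hJt.const_mul (Complex.I/2))
    simpa [Ifun] using this
  apply hlim.congr'
  filter_upwards [eventually_ge_atTop x] with N hN
  exact (eq1 hx hN).symm

lemma normJ {x : ℝ} (hx : 1 ≤ x) : ‖J x‖ ≤ (3/2) * x ^ (-(5:ℝ)/2) := by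
  have hx0 : (0:ℝ) < x := lt_of_lt_of_le one_pos hx
  have hJt := intervalIntegral_tendsto_integral_Ioi x (hInt2 hx0) tendsto_id
  apply le_of_tendsto hJt.norm
  filter_upwards [eventually_ge_atTop x] with N hN
  exact Jbound hx hN

lemma part2 {x : ℝ} (hx : 1 ≤ x) :
    ‖Ifun x - (Complex.I/2) * (x:ℂ)⁻¹ * E x‖ ≤ (3/4) * x ^ (-(5:ℝ)/2) := by
  have hdiff : Ifun x - (Complex.I/2) * (x:ℂ)⁻¹ * E x = -((Complex.I/2) * J x) := by
    simp only [Ifun, G]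
    push_cast
    ring
  rw [hdiff, norm_neg, norm_mul]
  have h1 : ‖Complex.I/2‖ = 1/2 := by simp
  rw [h1]
  linarith [normJ hx]

lemma normM {x : ℝ} (hx0 : 0 < x) : ‖(Complex.I/2) * (x:ℂ)⁻¹ * E x‖ = (1/2) * x⁻¹ := by
  rw [norm_mul, norm_mul, norm_E, mul_one, norm_inv, Complex.norm_real,
    Real.norm_eq_abs, abs_of_pos hx0]
  simp

lemma Mne {x : ℝ} (hx0 : 0 < x) : (Complex.I/2) * (x:ℂ)⁻¹ * E x ≠ 0 := by
  apply mul_ne_zero (mul_ne_zero (by simp [Complex.I_ne_zero]) _) (Complex.exp_ne_zero _)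
  simpa using hx0.ne'

lemma part3 : Tendsto (fun x : ℝ => Ifun x / ((Complex.I/2) * (x:ℂ)⁻¹ * E x))
    atTop (nhds 1) := by
  rw [← tendsto_sub_nhds_zero_iff]
  apply squeeze_zero_norm' (a := fun x : ℝ => (3/2) * x ^ (-(3/2) : ℝ))
  · filter_upwards [eventually_ge_atTop 1] with x hx
    have hx0 : (0:ℝ) < x := lt_of_lt_of_le one_pos hx
    have hM := Mne hx0
    have : Ifun x / ((Complex.I/2) * (x:ℂ)⁻¹ * E x) - 1
        = (Ifun x - (Complex.I/2) * (x:ℂ)⁻¹ * E x) / ((Complex.I/2) * (x:ℂ)⁻¹ * E x) := by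
      rw [sub_div, div_self hM]
    rw [this, norm_div, normM hx0, div_le_iff₀ (by positivity)]
    calc ‖Ifun x - (Complex.I/2) * (x:ℂ)⁻¹ * E x‖ ≤ (3/4) * x ^ (-(5:ℝ)/2) := part2 hx
      _ = (3/2) * x ^ ((-(3/2)):ℝ) * (1/2 * x⁻¹) := by
          rw [show ((-(3/2)):ℝ) = -(5:ℝ)/2 + 1 by norm_num, Real.rpow_add hx0,
            Real.rpow_one]
          field_simp
          ring
  · simpa using (tendsto_rpow_neg_atTop (by norm_num : (0:ℝ) < 3/2)).const_mul ((3:ℝ)/2)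

end Stmt6

/-- For every `x > 0` the improper integral `∫_x^∞ t^{-1/2} exp(i(4/3)t^{3/2}) dt` converges,
its value `I(x)` satisfies `|I(x) - (i/2) x⁻¹ exp(i(4/3)x^{3/2})| ≤ C x^{-5/2}` for `x ≥ 1`,
and in particular `I(x) = (i/2) x⁻¹ exp(i(4/3)x^{3/2}) (1 + o(1))` as `x → ∞`. -/
theorem stmt_6 :
    ∃ I : ℝ → ℂ,
      (∀ x > (0:ℝ), Tendsto
        (fun N : ℝ => ∫ t in x..N, ((t ^ (-(1:ℝ)/2) : ℝ) : ℂ) *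
          Complex.exp (Complex.I * (((4/3) * t ^ ((3:ℝ)/2) : ℝ) : ℂ)))
        atTop (nhds (I x))) ∧
      (∃ C : ℝ, ∀ x ≥ (1:ℝ),
        ‖I x - (Complex.I / 2) * (x : ℂ)⁻¹ *
            Complex.exp (Complex.I * (((4/3) * x ^ ((3:ℝ)/2) : ℝ) : ℂ))‖
          ≤ C * x ^ (-(5:ℝ)/2)) ∧
      Tendsto (fun x : ℝ => I x / ((Complex.I / 2) * (x : ℂ)⁻¹ *
          Complex.exp (Complex.I * (((4/3) * x ^ ((3:ℝ)/2) : ℝ) : ℂ))))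
        atTop (nhds 1) := by
  exact ⟨Stmt6.Ifun, fun x hx => Stmt6.part1 hx,
    ⟨3/4, fun x hx => Stmt6.part2 hx⟩, Stmt6.part3⟩
end
end

section
/- Let q : ℝ → ℝ be Hölder continuous with exponent α for some α ∈ (1/2, 1], i.e. sup_x |q(x)| + sup_{x≠y} |q(x)−q(y)|/|x−y|^α < ∞. Then there exist p with 1 ≤ p < 2, a real number x₀ > 0, and functions q₁, q₂ on (x₀,∞) such that q = q₁ + q₂ on (x₀,∞), q₂ is differentiable and bounded on (x₀,∞) (so that for every ζ > 0 one has |q₂(x)| ≤ ζ·x for all sufficiently large x), and the functions x ↦ q₁(x²) and x ↦ x^{−1}·q₂′(x²) belong to L^p((√x₀, ∞)). -/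
open MeasureTheory Filter

noncomputable section

private lemma memLp_aux {f : ℝ → ℝ} {p s K : ℝ} (hp : 1 ≤ p) (hK : 0 ≤ K) (hsp : s * p < -1)
    (hmeas : AEStronglyMeasurable f (volume.restrict (Set.Ioi (1:ℝ))))
    (hb : ∀ x, 1 < x → |f x| ≤ K * x ^ s) :
    MemLp f (ENNReal.ofReal p) (volume.restrict (Set.Ioi (1:ℝ))) := by
  have hp0 : 0 < p := lt_of_lt_of_le one_pos hp
  have hq0 : ENNReal.ofReal p ≠ 0 := by
    simp only [ne_eq, ENNReal.ofReal_eq_zero, not_le]; exact hp0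
  have hqt : ENNReal.ofReal p ≠ ⊤ := ENNReal.ofReal_ne_top
  have htr : (ENNReal.ofReal p).toReal = p := ENNReal.toReal_ofReal hp0.le
  have hcont : Continuous (fun y : ℝ => y ^ p) :=
    continuous_iff_continuousAt.mpr fun x => Real.continuousAt_rpow_const x p (Or.inr hp0.le)
  have hint : Integrable (fun x => ‖f x‖ ^ p) (volume.restrict (Set.Ioi (1:ℝ))) := by
    have hg : IntegrableOn (fun x : ℝ => K ^ p * x ^ (s * p)) (Set.Ioi (1:ℝ)) :=
      (integrableOn_Ioi_rpow_of_lt hsp one_pos).const_mul _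
    refine Integrable.mono hg (hcont.comp_aestronglyMeasurable hmeas.norm) ?_
    filter_upwards [ae_restrict_mem measurableSet_Ioi] with x hx
    have hx1 : (1:ℝ) < x := hx
    have hx0 : (0:ℝ) < x := lt_trans one_pos hx1
    have hxs : 0 ≤ x ^ s := (Real.rpow_pos_of_pos hx0 s).le
    have h1 : |f x| ^ p ≤ (K * x ^ s) ^ p :=
      Real.rpow_le_rpow (abs_nonneg _) (hb x hx1) hp0.le
    rw [Real.mul_rpow hK hxs, ← Real.rpow_mul hx0.le] at h1
    have h2 : 0 ≤ K ^ p * x ^ (s * p) :=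
      mul_nonneg (Real.rpow_nonneg hK p) (Real.rpow_nonneg hx0.le _)
    simp only [Real.norm_eq_abs]
    rw [abs_of_nonneg h2, abs_of_nonneg (Real.rpow_nonneg (abs_nonneg (f x)) p)]
    exact h1
  have h1 : MemLp (fun x => ‖f x‖ ^ (ENNReal.ofReal p).toReal)
      (ENNReal.ofReal p / ENNReal.ofReal p) (volume.restrict (Set.Ioi (1:ℝ))) := by
    rw [ENNReal.div_self hq0 hqt, htr]
    exact (memLp_one_iff_integrable).mpr hint
  exact (memLp_norm_rpow_iff hmeas hq0 hqt).mp h1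

set_option maxHeartbeats 1000000 in
/-- If `q` is Hölder continuous with exponent `α ∈ (1/2, 1]`, then `q` decomposes on some
`(x₀,∞)` as `q = q₁ + q₂` with `q₂` differentiable and bounded on `(x₀,∞)` (hence for every
`ζ > 0` one has `|q₂(x)| ≤ ζ x` for all sufficiently large `x`), and both `x ↦ q₁(x²)` and
`x ↦ x⁻¹ q₂'(x²)` in `L^p((√x₀,∞))` for some `1 ≤ p < 2`. -/
theorem stmt_11 (q : ℝ → ℝ) (α : ℝ) (hα : 1/2 < α) (hα1 : α ≤ 1)
    (hHolder : ∃ C : ℝ, (∀ x, |q x| ≤ C) ∧ ∀ x y : ℝ, x ≠ y → |q x - q y| ≤ C * |x - y| ^ α) :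
    ∃ p : ℝ, 1 ≤ p ∧ p < 2 ∧
    ∃ x₀ > (0:ℝ), ∃ q₁ q₂ : ℝ → ℝ,
      (∀ x > x₀, q x = q₁ x + q₂ x) ∧
      (∀ x > x₀, DifferentiableAt ℝ q₂ x) ∧
      (∃ M : ℝ, ∀ x > x₀, |q₂ x| ≤ M) ∧
      (∀ ζ > (0:ℝ), ∃ R : ℝ, ∀ x ≥ R, |q₂ x| ≤ ζ * x) ∧
      MemLp (fun x : ℝ => q₁ (x^2)) (ENNReal.ofReal p)
        (volume.restrict (Set.Ioi (Real.sqrt x₀))) ∧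
      MemLp (fun x : ℝ => x⁻¹ * deriv q₂ (x^2)) (ENNReal.ofReal p)
        (volume.restrict (Set.Ioi (Real.sqrt x₀))) := by
  obtain ⟨C, hC1, hC2⟩ := hHolder
  have hC0 : 0 ≤ C := (abs_nonneg _).trans (hC1 0)
  have hα0 : 0 < α := by linarith
  -- continuity of q
  have hqc : Continuous q := by
    rw [continuous_iff_continuousAt]
    intro x
    rw [ContinuousAt, tendsto_iff_dist_tendsto_zero]
    have hb : ∀ y, dist (q y) (q x) ≤ C * |y - x| ^ α := by
      intro y
      rcases eq_or_ne y x with rfl | hyx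
      · simp [Real.dist_eq, Real.zero_rpow hα0.ne']
      · rw [Real.dist_eq]; exact hC2 y x hyx
    have hlim : Tendsto (fun y => C * |y - x| ^ α) (nhds x) (nhds 0) := by
      have h1 : Tendsto (fun y : ℝ => |y - x|) (nhds x) (nhds 0) := by
        have := ((continuous_id.sub (continuous_const (y := x))).abs).tendsto x
        simpa using this
      have h2 : ContinuousAt (fun z : ℝ => z ^ α) 0 :=
        Real.continuousAt_rpow_const 0 α (Or.inr hα0.le)
      have h3 := h2.tendsto.comp h1
      rw [Real.zero_rpow hα0.ne'] at h3
      simpa using h3.const_mul C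
    exact squeeze_zero (fun y => dist_nonneg) hb hlim
  -- numeric parameters
  set β : ℝ := 1 / ((1 + 2*α) * (3/2 - α)) with hβ_def
  have h32 : (0:ℝ) < 3/2 - α := by linarith
  have hA : (0:ℝ) < (1 + 2*α) * (3/2 - α) := mul_pos (by linarith) h32
  have hβ : 0 < β := by rw [hβ_def]; positivity
  have hp1 : (1:ℝ) ≤ (2*α+1)/(2*α) := by
    rw [le_div_iff₀ (by linarith : (0:ℝ) < 2*α)]; linarith
  have hp2 : (2*α+1)/(2*α) < 2 := by
    rw [div_lt_iff₀ (by linarith : (0:ℝ) < 2*α)]; linarith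
  have h2α : (0:ℝ) < 2*α := by linarith
  have hne1 : (1 + 2*α) ≠ 0 := by positivity
  have hne2 : (3/2 - α) ≠ 0 := ne_of_gt h32
  have hβe : β * ((1 + 2*α) * (3/2 - α)) = 1 := by
    rw [hβ_def]
    field_simp
    exact div_self (by linarith : (3:ℝ) - 2*α ≠ 0)
  have hb2 : 0 < β * (1 + 2*α) := by positivity
  have num1 : (-(2*(α*β))) * ((2*α+1)/(2*α)) < -1 := by
    rw [← mul_div_assoc, div_lt_iff₀ h2α]
    nlinarith [hβe, mul_pos hb2 (show (0:ℝ) < α - 1/2 by linarith),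
      mul_pos hα0 (mul_pos hb2 (show (0:ℝ) < α - 1/2 by linarith))]
  have num2 : (2*(β*(1-α)) - 1) * ((2*α+1)/(2*α)) < -1 := by
    rw [← mul_div_assoc, div_lt_iff₀ h2α]
    nlinarith [hβe, mul_pos hb2 (show (0:ℝ) < α - 1/2 by linarith)]
  -- the decomposition
  set F : ℝ → ℝ := fun t => ∫ s in (0:ℝ)..t, q s with hF_def
  have hF : ∀ x : ℝ, HasDerivAt F (q x) x := fun x =>
    (hqc.integral_hasStrictDerivAt 0 x).hasDerivAt
  have hFc : Continuous F := continuous_iff_continuousAt.mpr fun x => (hF x).continuousAt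
  set q₂ : ℝ → ℝ := fun t => t ^ β * (F (t + t ^ (-β)) - F t) with hq₂_def
  set q₁ : ℝ → ℝ := fun t => q t - q₂ t with hq₁_def
  set D : ℝ → ℝ := fun t => β * t ^ (β-1) * (F (t + t ^ (-β)) - F t) +
      t ^ β * (q (t + t ^ (-β)) * (1 + (-β) * t ^ (-β-1)) - q t) with hD_def
  have hD : ∀ t : ℝ, 0 < t → HasDerivAt q₂ (D t) t := by
    intro t ht
    have h1 : HasDerivAt (fun t : ℝ => t ^ β) (β * t ^ (β - 1)) t :=
      Real.hasDerivAt_rpow_const (Or.inl ht.ne')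
    have h2 : HasDerivAt (fun t : ℝ => t + t ^ (-β)) (1 + (-β) * t ^ (-β - 1)) t :=
      (hasDerivAt_id t).add (Real.hasDerivAt_rpow_const (Or.inl ht.ne'))
    have h3 : HasDerivAt (fun t : ℝ => F (t + t ^ (-β)))
        (q (t + t ^ (-β)) * (1 + (-β) * t ^ (-β-1))) t := (hF _).comp t h2
    have h4 := h3.sub (hF t)
    exact h1.mul h4
  have hderiv : ∀ t : ℝ, 0 < t → deriv q₂ t = D t := fun t ht => (hD t ht).deriv
  -- estimate on F-increments
  have key1 : ∀ t : ℝ, 0 < t → |F (t + t ^ (-β)) - F t| ≤ C * t ^ (-β) := by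
    intro t ht
    have hh : 0 < t ^ (-β) := Real.rpow_pos_of_pos ht _
    have heq : F (t + t ^ (-β)) - F t = ∫ s in t..(t + t ^ (-β)), q s := by
      simp only [hF_def]
      exact intervalIntegral.integral_interval_sub_left (hqc.intervalIntegrable _ _)
        (hqc.intervalIntegrable _ _)
    rw [heq]
    have hb := intervalIntegral.norm_integral_le_of_norm_le_const
      (a := t) (b := t + t ^ (-β)) (C := C) (f := q)
      (fun s _ => by rw [Real.norm_eq_abs]; exact hC1 s)
    rw [Real.norm_eq_abs, add_sub_cancel_left, abs_of_pos hh] at hb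
    exact hb
  -- estimate on q - q₂
  have key2 : ∀ t : ℝ, 1 < t → |q t - q₂ t| ≤ C * t ^ (-(α * β)) := by
    intro t ht1
    have ht : 0 < t := lt_trans one_pos ht1
    have hh : 0 < t ^ (-β) := Real.rpow_pos_of_pos ht _
    have hone : t ^ β * t ^ (-β) = 1 := by
      rw [← Real.rpow_add ht]; simp
    have hFi : F (t + t ^ (-β)) - F t = ∫ s in t..(t + t ^ (-β)), q s := by
      simp only [hF_def]
      exact intervalIntegral.integral_interval_sub_left (hqc.intervalIntegrable _ _)
        (hqc.intervalIntegrable _ _)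
    have hq₂e : q₂ t = t ^ β * ∫ s in t..(t + t ^ (-β)), q s := by
      simp only [hq₂_def]; rw [hFi]
    have heq : q t - q₂ t = t ^ β * ∫ s in t..(t + t ^ (-β)), (q t - q s) := by
      rw [intervalIntegral.integral_sub intervalIntegrable_const
        (hqc.intervalIntegrable _ _), intervalIntegral.integral_const,
        add_sub_cancel_left, smul_eq_mul, hq₂e]
      rw [mul_sub, ← mul_assoc, hone, one_mul]
    rw [heq]
    have hbound : ∀ s ∈ Set.uIoc t (t + t ^ (-β)), ‖q t - q s‖ ≤ C * (t ^ (-β)) ^ α := by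
      intro s hs
      rw [Set.uIoc_of_le (by linarith)] at hs
      rw [Real.norm_eq_abs]
      have h1 : |q t - q s| ≤ C * |t - s| ^ α := hC2 t s (ne_of_lt hs.1)
      refine h1.trans (mul_le_mul_of_nonneg_left ?_ hC0)
      refine Real.rpow_le_rpow (abs_nonneg _) ?_ hα0.le
      rw [abs_sub_comm, abs_of_pos (by linarith [hs.1] : (0:ℝ) < s - t)]
      linarith [hs.2]
    have hnorm := intervalIntegral.norm_integral_le_of_norm_le_const hbound
    rw [Real.norm_eq_abs, add_sub_cancel_left, abs_of_pos hh] at hnorm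
    rw [abs_mul, abs_of_pos (Real.rpow_pos_of_pos ht β)]
    calc t ^ β * |∫ s in t..(t + t ^ (-β)), (q t - q s)|
        ≤ t ^ β * (C * (t ^ (-β)) ^ α * t ^ (-β)) :=
          mul_le_mul_of_nonneg_left hnorm (Real.rpow_pos_of_pos ht β).le
      _ = C * t ^ (-(α * β)) := by
          rw [← Real.rpow_mul ht.le,
            show (-(α*β)) = β + (-β * α + -β) by ring,
            Real.rpow_add ht, Real.rpow_add ht]
          ring
  -- estimate on D
  have key3 : ∀ t : ℝ, 1 < t → |D t| ≤ (2*β+1) * C * t ^ (β * (1 - α)) := by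
    intro t ht1
    have ht : 0 < t := lt_trans one_pos ht1
    have hh : 0 < t ^ (-β) := Real.rpow_pos_of_pos ht _
    have e1 : t ^ (β-1) * t ^ (-β) = t ^ (-1:ℝ) := by
      rw [← Real.rpow_add ht]; ring_nf
    have e3 : t ^ β * t ^ (-β-1) = t ^ (-1:ℝ) := by
      rw [← Real.rpow_add ht]; ring_nf
    have e2 : t ^ β * (t ^ (-β)) ^ α = t ^ (β * (1 - α)) := by
      rw [← Real.rpow_mul ht.le, ← Real.rpow_add ht]; ring_nf
    have e4 : t ^ (-1:ℝ) ≤ t ^ (β * (1 - α)) := by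
      apply Real.rpow_le_rpow_of_exponent_le ht1.le
      nlinarith [hβ.le]
    have hqu : |q (t + t ^ (-β)) - q t| ≤ C * (t ^ (-β)) ^ α := by
      have hne : t + t ^ (-β) ≠ t := by
        intro h; nlinarith [hh]
      have := hC2 (t + t ^ (-β)) t hne
      rwa [add_sub_cancel_left, abs_of_pos hh] at this
    have hterm1 : |β * t ^ (β-1) * (F (t + t ^ (-β)) - F t)| ≤ β * C * t ^ (-1:ℝ) := by
      rw [abs_mul, abs_mul, abs_of_nonneg hβ.le,
        abs_of_nonneg (Real.rpow_nonneg ht.le _)]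
      calc β * t ^ (β-1) * |F (t + t ^ (-β)) - F t|
          ≤ β * t ^ (β-1) * (C * t ^ (-β)) := by
            apply mul_le_mul_of_nonneg_left (key1 t ht)
            positivity
        _ = β * C * t ^ (-1:ℝ) := by rw [← e1]; ring
    have hterm2 : |t ^ β * (q (t + t ^ (-β)) * (1 + (-β) * t ^ (-β-1)) - q t)|
        ≤ C * t ^ (β * (1 - α)) + β * C * t ^ (-1:ℝ) := by
      rw [abs_mul, abs_of_nonneg (Real.rpow_nonneg ht.le _)]
      have hinner : |q (t + t ^ (-β)) * (1 + (-β) * t ^ (-β-1)) - q t|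
          ≤ C * (t ^ (-β)) ^ α + C * (β * t ^ (-β-1)) := by
        have hrw : q (t + t ^ (-β)) * (1 + (-β) * t ^ (-β-1)) - q t
            = (q (t + t ^ (-β)) - q t) + q (t + t ^ (-β)) * ((-β) * t ^ (-β-1)) := by ring
        rw [hrw]
        refine (abs_add_le _ _).trans (add_le_add hqu ?_)
        rw [abs_mul, abs_mul, abs_neg, abs_of_nonneg hβ.le,
          abs_of_nonneg (Real.rpow_nonneg ht.le _)]
        have := hC1 (t + t ^ (-β))
        have hb : 0 ≤ β * t ^ (-β-1) := by positivity
        nlinarith [abs_nonneg (q (t + t ^ (-β))), Real.rpow_nonneg ht.le (-β-1)]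
      calc t ^ β * |q (t + t ^ (-β)) * (1 + (-β) * t ^ (-β-1)) - q t|
          ≤ t ^ β * (C * (t ^ (-β)) ^ α + C * (β * t ^ (-β-1))) := by
            apply mul_le_mul_of_nonneg_left hinner (Real.rpow_nonneg ht.le _)
        _ = C * (t ^ β * (t ^ (-β)) ^ α) + β * C * (t ^ β * t ^ (-β-1)) := by ring
        _ = C * t ^ (β * (1 - α)) + β * C * t ^ (-1:ℝ) := by rw [e2, e3]
    calc |D t| ≤ |β * t ^ (β-1) * (F (t + t ^ (-β)) - F t)| +
          |t ^ β * (q (t + t ^ (-β)) * (1 + (-β) * t ^ (-β-1)) - q t)| := abs_add_le _ _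
      _ ≤ β * C * t ^ (-1:ℝ) + (C * t ^ (β * (1 - α)) + β * C * t ^ (-1:ℝ)) :=
          add_le_add hterm1 hterm2
      _ ≤ (2*β+1) * C * t ^ (β * (1 - α)) := by nlinarith [e4, mul_nonneg (mul_nonneg hβ.le hC0) (Real.rpow_nonneg ht.le (-1:ℝ)), mul_nonneg hβ.le hC0, mul_le_mul_of_nonneg_left e4 (mul_nonneg hβ.le hC0)]
  -- boundedness of q₂
  have hq₂_bdd : ∀ x : ℝ, 1 < x → |q₂ x| ≤ 2*C := by
    intro x hx
    have h1 := key2 x hx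
    have h2 : x ^ (-(α*β)) ≤ 1 :=
      Real.rpow_le_one_of_one_le_of_nonpos hx.le (by nlinarith)
    have h3 : |q₂ x| ≤ |q x| + |q x - q₂ x| := by
      have h4 := abs_sub (q x) (q x - q₂ x)
      rwa [sub_sub_cancel] at h4
    calc |q₂ x| ≤ |q x| + |q x - q₂ x| := h3
      _ ≤ C + C * x ^ (-(α*β)) := add_le_add (hC1 x) h1
      _ ≤ 2*C := by nlinarith
  -- measurability
  have hum : Measurable fun t : ℝ => t + t ^ (-β) := by fun_prop
  have hrm : Measurable fun t : ℝ => t ^ β := by fun_prop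
  have hq₂m : Measurable q₂ := by
    rw [hq₂_def]
    exact hrm.mul ((hFc.measurable.comp hum).sub hFc.measurable)
  have hq₁m : Measurable q₁ := by
    rw [hq₁_def]
    exact hqc.measurable.sub hq₂m
  have hDm : Measurable (deriv q₂) := measurable_deriv q₂
  -- assemble
  refine ⟨(2*α+1)/(2*α), hp1, hp2, 1, one_pos, q₁, q₂, ?_, ?_, ⟨2*C, ?_⟩, ?_, ?_, ?_⟩
  · intro x _; rw [hq₁_def]; ring
  · intro x hx; exact (hD x (lt_trans one_pos hx)).differentiableAt
  · intro x hx; exact hq₂_bdd x hx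
  · intro ζ hζ
    refine ⟨max 2 (2*C/ζ + 1), fun x hx => ?_⟩
    have hx2 : (2:ℝ) ≤ x := le_trans (le_max_left _ _) hx
    have hxc : 2*C/ζ + 1 ≤ x := le_trans (le_max_right _ _) hx
    have h1 := hq₂_bdd x (by linarith)
    have h2 : 2*C ≤ ζ * x := by
      have h3 : 2*C/ζ ≤ x := by linarith
      rw [div_le_iff₀ hζ] at h3; linarith [h3]
    linarith
  · rw [Real.sqrt_one]
    refine memLp_aux hp1 hC0 num1 ?_ ?_
    · exact (hq₁m.comp (measurable_id.pow_const 2)).aestronglyMeasurable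
    · intro x hx
      have hx0 : (0:ℝ) < x := lt_trans one_pos hx
      have hx2 : (1:ℝ) < x^2 := by nlinarith
      have h1 := key2 (x^2) hx2
      have h2 : ((x:ℝ)^2) ^ (-(α*β)) = x ^ (-(2*(α*β))) := by
        rw [← Real.rpow_natCast x 2, ← Real.rpow_mul hx0.le]
        norm_num
      rw [h2] at h1
      exact h1
  · rw [Real.sqrt_one]
    refine memLp_aux hp1 (by positivity : (0:ℝ) ≤ (2*β+1)*C) num2 ?_ ?_
    · exact (measurable_inv.mul (hDm.comp (measurable_id.pow_const 2))).aestronglyMeasurable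
    · intro x hx
      have hx0 : (0:ℝ) < x := lt_trans one_pos hx
      have hx2 : (1:ℝ) < x^2 := by nlinarith
      have hx20 : (0:ℝ) < x^2 := by positivity
      rw [hderiv (x^2) hx20]
      have h1 := key3 (x^2) hx2
      have h2 : ((x:ℝ)^2) ^ (β*(1-α)) = x ^ (2*(β*(1-α))) := by
        rw [← Real.rpow_natCast x 2, ← Real.rpow_mul hx0.le]
        norm_num
      rw [h2] at h1
      rw [abs_mul, abs_inv, abs_of_pos hx0]
      have h3 : x⁻¹ * |D (x^2)| ≤ x⁻¹ * ((2*β+1) * C * x ^ (2*(β*(1-α)))) :=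
        mul_le_mul_of_nonneg_left h1 (inv_nonneg.mpr hx0.le)
      refine h3.trans (le_of_eq ?_)
      rw [show (2*(β*(1-α)) - 1) = 2*(β*(1-α)) + (-1) by ring,
        Real.rpow_add hx0, Real.rpow_neg_one]
      ring
end
end

section
/- Let M > 0 and let W : [1,∞) → ℝ be measurable with |W(ξ)| ≤ M for all ξ ≥ 1. Then there exists a constant C = C(M) such that for every real-valued function φ on [1,∞) which is continuously differentiable with locally absolutely continuous derivative and satisfies −φ″(ξ) + W(ξ)·φ(ξ) = φ(ξ) for almost every ξ ≥ 1, and for every L ≥ 2: ∫₁^L φ(ξ)² dξ ≤ ∫₁^L (φ(ξ)² + φ′(ξ)²) dξ ≤ C·∫₁^L φ(ξ)² dξ. -/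
open MeasureTheory Filter

open Set in
noncomputable section

namespace Stmt15Aux

variable {K : ℝ} {φ dφ w : ℝ → ℝ}

/-- The "energy" (squared Prüfer radius) of a solution. -/
def En (φ dφ : ℝ → ℝ) (ξ : ℝ) : ℝ := (φ ξ)^2 + (dφ ξ)^2

lemma En_nonneg (ξ : ℝ) : 0 ≤ En φ dφ ξ := add_nonneg (sq_nonneg _) (sq_nonneg _)

lemma le_abs_of_sq_le_sq {a b : ℝ} (h : b^2 ≤ a^2) (hb : 0 ≤ b) : b ≤ |a| := by
  have := Real.sqrt_le_sqrt h
  rwa [Real.sqrt_sq hb, Real.sqrt_sq_eq_abs] at this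

lemma abs_le_of_sq_le_sq' {a b : ℝ} (h : a^2 ≤ b^2) (hb : 0 ≤ b) : |a| ≤ b := by
  have := Real.sqrt_le_sqrt h
  rwa [Real.sqrt_sq_eq_abs, Real.sqrt_sq hb] at this

lemma contφ (hφ : ∀ ξ ≥ (1:ℝ), HasDerivAt φ (dφ ξ) ξ) {s : Set ℝ} (hs : s ⊆ Set.Ici 1) :
    ContinuousOn φ s := fun x hx => ((hφ x (hs hx)).continuousAt).continuousWithinAt

lemma contdφ (hwi : ∀ a ≥ (1:ℝ), ∀ b ≥ (1:ℝ), IntervalIntegrable w volume a b)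
    (hdφ : ∀ ξ ≥ (1:ℝ), dφ ξ = dφ 1 + ∫ t in (1:ℝ)..ξ, w t)
    {a b : ℝ} (ha : 1 ≤ a) : ContinuousOn dφ (Set.Icc a b) := by
  rcases le_or_gt a b with hab | hab
  · have hb : (1:ℝ) ≤ b := ha.trans hab
    have hsub : Set.Icc a b ⊆ Set.uIcc 1 b := by
      rw [Set.uIcc_of_le hb]; exact Set.Icc_subset_Icc ha le_rfl
    have hprim : ContinuousOn (fun x => dφ 1 + ∫ t in (1:ℝ)..x, w t) (Set.uIcc 1 b) :=
      continuousOn_const.add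
        (intervalIntegral.continuousOn_primitive_interval' (hwi 1 le_rfl b hb) Set.left_mem_uIcc)
    exact (hprim.mono hsub).congr fun x hx => hdφ x (ha.trans hx.1)
  · rw [Set.Icc_eq_empty (not_le.mpr hab)]; exact continuousOn_empty _

lemma contEn (hφ : ∀ ξ ≥ (1:ℝ), HasDerivAt φ (dφ ξ) ξ)
    (hwi : ∀ a ≥ (1:ℝ), ∀ b ≥ (1:ℝ), IntervalIntegrable w volume a b)
    (hdφ : ∀ ξ ≥ (1:ℝ), dφ ξ = dφ 1 + ∫ t in (1:ℝ)..ξ, w t)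
    {a b : ℝ} (ha : 1 ≤ a) : ContinuousOn (En φ dφ) (Set.Icc a b) := by
  have h1 : ContinuousOn φ (Set.Icc a b) := contφ hφ (fun x hx => le_trans ha hx.1)
  exact (h1.pow 2).add ((contdφ hwi hdφ ha).pow 2)

lemma intEn (hφ : ∀ ξ ≥ (1:ℝ), HasDerivAt φ (dφ ξ) ξ)
    (hwi : ∀ a ≥ (1:ℝ), ∀ b ≥ (1:ℝ), IntervalIntegrable w volume a b)
    (hdφ : ∀ ξ ≥ (1:ℝ), dφ ξ = dφ 1 + ∫ t in (1:ℝ)..ξ, w t)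
    {a b : ℝ} (ha : 1 ≤ a) (hab : a ≤ b) : IntervalIntegrable (En φ dφ) volume a b := by
  apply ContinuousOn.intervalIntegrable
  rw [Set.uIcc_of_le hab]; exact contEn hφ hwi hdφ ha

lemma intφsq (hφ : ∀ ξ ≥ (1:ℝ), HasDerivAt φ (dφ ξ) ξ)
    {a b : ℝ} (ha : (1:ℝ) ≤ a) (hab : a ≤ b) :
    IntervalIntegrable (fun t => (φ t)^2) volume a b := by
  apply ContinuousOn.intervalIntegrable
  rw [Set.uIcc_of_le hab]
  exact (contφ hφ (fun t ht => ha.trans ht.1)).pow 2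

/-- FTC for φ -/
lemma ftcφ (hφ : ∀ ξ ≥ (1:ℝ), HasDerivAt φ (dφ ξ) ξ)
    (hwi : ∀ a ≥ (1:ℝ), ∀ b ≥ (1:ℝ), IntervalIntegrable w volume a b)
    (hdφ : ∀ ξ ≥ (1:ℝ), dφ ξ = dφ 1 + ∫ t in (1:ℝ)..ξ, w t)
    {s t : ℝ} (hs : 1 ≤ s) (ht : 1 ≤ t) :
    ∫ u in s..t, dφ u = φ t - φ s := by
  have hsub : Set.uIcc s t ⊆ Set.Ici 1 := fun x hx => (le_min hs ht).trans hx.1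
  apply intervalIntegral.integral_eq_sub_of_hasDerivAt
  · exact fun x hx => hφ x (hsub hx)
  · apply ContinuousOn.intervalIntegrable
    rw [Set.uIcc]
    exact contdφ hwi hdφ (le_min hs ht)

/-- FTC for φ² -/
lemma ftcφsq (hφ : ∀ ξ ≥ (1:ℝ), HasDerivAt φ (dφ ξ) ξ)
    (hwi : ∀ a ≥ (1:ℝ), ∀ b ≥ (1:ℝ), IntervalIntegrable w volume a b)
    (hdφ : ∀ ξ ≥ (1:ℝ), dφ ξ = dφ 1 + ∫ t in (1:ℝ)..ξ, w t)
    {s t : ℝ} (hs : 1 ≤ s) (ht : 1 ≤ t) :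
    ∫ u in s..t, 2 * φ u * dφ u = (φ t)^2 - (φ s)^2 := by
  have hsub : Set.uIcc s t ⊆ Set.Ici 1 := fun x hx => (le_min hs ht).trans hx.1
  apply intervalIntegral.integral_eq_sub_of_hasDerivAt (f := fun x => (φ x)^2)
  · intro x hx
    have h : HasDerivAt (fun x => (φ x)^2) _ x := (hφ x (hsub hx)).pow 2
    simpa [mul_comm, mul_assoc, mul_left_comm] using h
  · apply ContinuousOn.intervalIntegrable
    have h1 : ContinuousOn φ (Set.uIcc s t) := contφ hφ hsub
    have h2 : ContinuousOn dφ (Set.uIcc s t) := by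
      rw [Set.uIcc]
      exact contdφ hwi hdφ (le_min hs ht)
    exact (continuousOn_const.mul h1).mul h2

/-- increment of dφ -/
lemma dφ_sub (hwi : ∀ a ≥ (1:ℝ), ∀ b ≥ (1:ℝ), IntervalIntegrable w volume a b)
    (hdφ : ∀ ξ ≥ (1:ℝ), dφ ξ = dφ 1 + ∫ t in (1:ℝ)..ξ, w t)
    {s t : ℝ} (hs : 1 ≤ s) (ht : 1 ≤ t) :
    dφ t - dφ s = ∫ u in s..t, w u := by
  rw [hdφ t ht, hdφ s hs]
  have h1 : IntervalIntegrable w volume 1 s := hwi 1 le_rfl s hs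
  have h2 : IntervalIntegrable w volume s t := hwi s hs t ht
  have := intervalIntegral.integral_add_adjacent_intervals h1 h2
  linarith [this]

/-- ∫|w| ≤ K ∫|φ| on [s,t] ⊆ [1,∞) -/
lemma intw (hφ : ∀ ξ ≥ (1:ℝ), HasDerivAt φ (dφ ξ) ξ)
    (hwi : ∀ a ≥ (1:ℝ), ∀ b ≥ (1:ℝ), IntervalIntegrable w volume a b)
    (hKb : ∀ᵐ ξ : ℝ, 1 ≤ ξ → |w ξ| ≤ K * |φ ξ|)
    {s t : ℝ} (hs : 1 ≤ s) (hst : s ≤ t) :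
    ∫ u in s..t, |w u| ≤ K * ∫ u in s..t, |φ u| := by
  have ht : (1:ℝ) ≤ t := hs.trans hst
  have hwint : IntervalIntegrable (fun u => |w u|) volume s t := (hwi s hs t ht).abs
  have hφc : ContinuousOn φ (Set.uIcc s t) := contφ hφ (by
    rw [Set.uIcc_of_le hst]; exact fun x hx => hs.trans hx.1)
  have hφint : IntervalIntegrable (fun u => K * |φ u|) volume s t :=
    (continuousOn_const.mul hφc.abs).intervalIntegrable
  have hae : (fun u => |w u|) ≤ᵐ[volume.restrict (Set.Icc s t)] fun u => K * |φ u| := by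
    have h1 : ∀ᵐ ξ ∂(volume.restrict (Set.Icc s t)), 1 ≤ ξ → |w ξ| ≤ K * |φ ξ| :=
      ae_restrict_of_ae hKb
    have h2 : ∀ᵐ ξ ∂(volume.restrict (Set.Icc s t)), ξ ∈ Set.Icc s t :=
      ae_restrict_mem measurableSet_Icc
    filter_upwards [h1, h2] with ξ hξ1 hξ2 using hξ1 (hs.trans hξ2.1)
  calc ∫ u in s..t, |w u| ≤ ∫ u in s..t, K * |φ u| :=
        intervalIntegral.integral_mono_ae_restrict hst hwint hφint hae
    _ = K * ∫ u in s..t, |φ u| := by rw [intervalIntegral.integral_const_mul]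

set_option maxHeartbeats 1000000 in
lemma comp1 (hK1 : 1 ≤ K)
    (hφ : ∀ ξ ≥ (1:ℝ), HasDerivAt φ (dφ ξ) ξ)
    (hwi : ∀ a ≥ (1:ℝ), ∀ b ≥ (1:ℝ), IntervalIntegrable w volume a b)
    (hdφ : ∀ ξ ≥ (1:ℝ), dφ ξ = dφ 1 + ∫ t in (1:ℝ)..ξ, w t)
    (hKb : ∀ᵐ ξ : ℝ, 1 ≤ ξ → |w ξ| ≤ K * |φ ξ|)
    {u v : ℝ} (hu : 1 ≤ u) (hv : 1 ≤ v)
    (huv : |u - v| ≤ 1/(2*(1+2*K^2))) :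
    En φ dφ u ≤ 4 * En φ dφ v := by
  set δ : ℝ := 1/(2*(1+2*K^2)) with hδdef
  have hKpos : (0:ℝ) < 1 + 2*K^2 := by nlinarith
  have hδpos : 0 < δ := by positivity
  have hδ1 : δ ≤ 1 := by rw [hδdef]; rw [div_le_one (by nlinarith)]; nlinarith
  have hδK : δ * (1 + 2*K^2) = 1/2 := by rw [hδdef]; field_simp
  clear_value δ
  set a := min u v with hadef
  set b := max u v with hbdef
  have ha1 : (1:ℝ) ≤ a := le_min hu hv
  have hab : a ≤ b := min_le_max
  have hb1 : (1:ℝ) ≤ b := ha1.trans hab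
  have hba : b - a ≤ δ := by rw [hbdef, hadef, max_sub_min_eq_abs, abs_sub_comm]; exact huv
  obtain ⟨m, hm, hmax⟩ := isCompact_Icc.exists_isMaxOn (Set.nonempty_Icc.mpr hab)
    (contEn hφ hwi hdφ ha1)
  set S := En φ dφ m with hSdef
  have hSb : ∀ x ∈ Set.Icc a b, En φ dφ x ≤ S := fun x hx => hmax hx
  have hS0 : 0 ≤ S := En_nonneg m
  clear_value S
  have hvab : v ∈ Set.Icc a b := ⟨min_le_right _ _, le_max_right _ _⟩
  have huab : u ∈ Set.Icc a b := ⟨min_le_left _ _, le_max_left _ _⟩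
  clear_value a b
  -- integrability/continuity on [a,b]
  have hφc : ContinuousOn φ (Set.Icc a b) := contφ hφ (fun x hx => ha1.trans hx.1)
  have hdφc : ContinuousOn dφ (Set.Icc a b) := contdφ hwi hdφ ha1
  -- subinterval inclusion for x, v ∈ Icc a b
  have hsub : ∀ x ∈ Set.Icc a b, Set.uIoc v x ⊆ Set.uIoc a b := by
    intro x hx
    apply Set.uIoc_subset_uIoc_of_uIcc_subset_uIcc
    have h1 : v ∈ Set.uIcc a b := by rw [Set.uIcc_of_le hab]; exact hvab
    have h2 : x ∈ Set.uIcc a b := by rw [Set.uIcc_of_le hab]; exact hx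
    exact Set.uIcc_subset_uIcc h1 h2
  have key : ∀ x ∈ Set.Icc a b, En φ dφ x ≤ 2 * En φ dφ v + δ * (1 + 2*K^2) * S := by
    intro x hx
    have hx1 : (1:ℝ) ≤ x := ha1.trans hx.1
    -- part 1 : φ x ^ 2 ≤ φ v ^ 2 + δ * S
    have b1 : |∫ u in v..x, 2 * φ u * dφ u| ≤ δ * S := by
      have habs : ∀ u ∈ Set.Icc a b, abs (2 * φ u * dφ u) ≤ S := by
        intro u hu'
        have h1 : abs (2 * φ u * dφ u) ≤ (φ u)^2 + (dφ u)^2 := by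
          rw [abs_le]; constructor <;> nlinarith [sq_nonneg (φ u + dφ u), sq_nonneg (φ u - dφ u)]
        exact h1.trans (hSb u hu')
      have hfc : ContinuousOn (fun u => 2 * φ u * dφ u) (Set.Icc a b) :=
        (continuousOn_const.mul hφc).mul hdφc
      have hfi : IntervalIntegrable (fun u => abs (2 * φ u * dφ u)) volume a b := by
        apply ContinuousOn.intervalIntegrable; rw [Set.uIcc_of_le hab]; exact hfc.abs
      calc |∫ u in v..x, 2 * φ u * dφ u|
          ≤ |∫ u in v..x, abs (2 * φ u * dφ u)| := by
            simpa only [Real.norm_eq_abs] using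
              intervalIntegral.norm_integral_le_abs_integral_norm
                (f := fun u => 2 * φ u * dφ u) (a := v) (b := x) (μ := volume)
        _ ≤ |∫ u in a..b, abs (2 * φ u * dφ u)| := by
            apply intervalIntegral.abs_integral_mono_interval (hsub x hx)
              (ae_of_all _ fun u => abs_nonneg _) hfi
        _ = ∫ u in a..b, abs (2 * φ u * dφ u) := by
            rw [abs_of_nonneg]
            exact intervalIntegral.integral_nonneg hab (fun u _ => abs_nonneg _)
        _ ≤ ∫ u in a..b, S := by
            apply intervalIntegral.integral_mono_on hab hfi
              (intervalIntegrable_const) habs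
        _ = (b - a) * S := by rw [intervalIntegral.integral_const, smul_eq_mul]
        _ ≤ δ * S := mul_le_mul_of_nonneg_right hba hS0
    have e1 : (φ x)^2 ≤ (φ v)^2 + δ * S := by
      have := ftcφsq hφ hwi hdφ hv hx1
      have h2 := (abs_le.mp b1).2
      nlinarith [this]
    -- part 2 : |∫ w| ≤ K * δ * sqrt S
    have b2 : |∫ u in v..x, w u| ≤ K * (δ * Real.sqrt S) := by
      have hsqS : ∀ u ∈ Set.Icc a b, |φ u| ≤ Real.sqrt S := by
        intro u hu'
        rw [Real.le_sqrt (abs_nonneg _) hS0]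
        calc |φ u|^2 = (φ u)^2 := sq_abs _
            _ ≤ En φ dφ u := le_add_of_nonneg_right (sq_nonneg _)
            _ ≤ S := hSb u hu'
      have hwib : IntervalIntegrable (fun u => abs (w u)) volume a b := (hwi a ha1 b hb1).abs
      calc |∫ u in v..x, w u|
          ≤ |∫ u in v..x, abs (w u)| := by
            simpa only [Real.norm_eq_abs] using
              intervalIntegral.norm_integral_le_abs_integral_norm
                (f := w) (a := v) (b := x) (μ := volume)
        _ ≤ |∫ u in a..b, abs (w u)| := by
            apply intervalIntegral.abs_integral_mono_interval (hsub x hx)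
              (ae_of_all _ fun u => abs_nonneg _) hwib
        _ = ∫ u in a..b, abs (w u) := by
            rw [abs_of_nonneg]
            exact intervalIntegral.integral_nonneg hab (fun u _ => abs_nonneg _)
        _ ≤ K * ∫ u in a..b, |φ u| := intw hφ hwi hKb ha1 hab
        _ ≤ K * ((b - a) * Real.sqrt S) := by
            apply mul_le_mul_of_nonneg_left _ (by linarith)
            calc ∫ u in a..b, |φ u| ≤ ∫ u in a..b, Real.sqrt S := by
                  apply intervalIntegral.integral_mono_on hab _ intervalIntegrable_const hsqS
                  apply ContinuousOn.intervalIntegrable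
                  rw [Set.uIcc_of_le hab]; exact hφc.abs
              _ = (b - a) * Real.sqrt S := by
                  rw [intervalIntegral.integral_const, smul_eq_mul]
        _ ≤ K * (δ * Real.sqrt S) := by
            apply mul_le_mul_of_nonneg_left _ (by linarith)
            exact mul_le_mul_of_nonneg_right hba (Real.sqrt_nonneg _)
    have e2 : (dφ x)^2 ≤ 2*(dφ v)^2 + 2*K^2*δ^2*S := by
      have hd := dφ_sub hwi hdφ hv hx1
      set I := ∫ u in v..x, w u
      have hdx : dφ x = dφ v + I := by linarith
      have hI2 : I^2 ≤ K^2 * δ^2 * S := by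
        have h1 : |I| ≤ K * (δ * Real.sqrt S) := b2
        have h2 : I^2 ≤ (K * (δ * Real.sqrt S))^2 := by
          rw [← sq_abs I]; exact pow_le_pow_left₀ (abs_nonneg _) h1 2
        have h3 : (Real.sqrt S)^2 = S := Real.sq_sqrt hS0
        have h4 : (K * (δ * Real.sqrt S))^2 = K^2*δ^2*S := by
          rw [mul_pow, mul_pow, h3]; ring
        linarith [h2, le_of_eq h4]
      rw [hdx]
      nlinarith [sq_nonneg (dφ v - I), hI2]
    have hδ2 : δ^2 ≤ δ := by
      rw [sq]; exact mul_le_of_le_one_left hδpos.le hδ1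
    have h40 : (0:ℝ) ≤ δ - δ^2 := sub_nonneg.mpr hδ2
    have h4 : 0 ≤ 2*K^2*(δ - δ^2)*S := mul_nonneg (mul_nonneg (by positivity) h40) hS0
    have hEnx : En φ dφ x = (φ x)^2 + (dφ x)^2 := rfl
    have hEnv : En φ dφ v = (φ v)^2 + (dφ v)^2 := rfl
    rw [hEnx, hEnv]
    nlinarith [sq_nonneg (φ v)]
  have hSbound : S ≤ 4 * En φ dφ v := by
    have := key m hm
    rw [hδK] at this
    linarith
  exact (hSb u huab).trans hSbound

lemma comp_n (hK1 : 1 ≤ K)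
    (hφ : ∀ ξ ≥ (1:ℝ), HasDerivAt φ (dφ ξ) ξ)
    (hwi : ∀ a ≥ (1:ℝ), ∀ b ≥ (1:ℝ), IntervalIntegrable w volume a b)
    (hdφ : ∀ ξ ≥ (1:ℝ), dφ ξ = dφ 1 + ∫ t in (1:ℝ)..ξ, w t)
    (hKb : ∀ᵐ ξ : ℝ, 1 ≤ ξ → |w ξ| ≤ K * |φ ξ|) :
    ∀ n : ℕ, ∀ u v : ℝ, 1 ≤ u → 1 ≤ v →
    |u - v| ≤ n * (1/(2*(1+2*K^2))) → En φ dφ u ≤ 4^n * En φ dφ v := by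
  have hKpos : (0:ℝ) < 1 + 2*K^2 := by nlinarith
  have hδpos : (0:ℝ) < 1/(2*(1+2*K^2)) := by positivity
  set δ : ℝ := 1/(2*(1+2*K^2)) with hδdef
  intro n
  induction n with
  | zero =>
      intro u v hu hv h
      norm_num at h
      have huv : u = v := sub_eq_zero.mp h
      rw [huv]; norm_num
  | succ n ih =>
      intro u v hu hv h
      by_cases hc : |u - v| ≤ δ
      · have h1 := comp1 hK1 hφ hwi hdφ hKb hu hv hc
        have h2 : (4:ℝ) ≤ 4^(n+1) := by
          calc (4:ℝ) = 4^1 := (pow_one 4).symm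
            _ ≤ 4^(n+1) := by
              apply pow_le_pow_right₀ (by norm_num) (by omega)
        nlinarith [En_nonneg (φ := φ) (dφ := dφ) v]
      · push_neg at hc
        rcases le_total u v with huv | hvu
        · set v' := v - δ with hv'def
          have habs : |u - v| = v - u := by rw [abs_sub_comm]; exact abs_of_nonneg (by linarith)
          have hgt : v - u > δ := by rw [habs] at hc; exact hc
          have hv'1 : 1 ≤ v' := by rw [hv'def]; linarith
          have h1 : |u - v'| ≤ n * δ := by
            rw [abs_sub_comm, abs_of_nonneg (by rw [hv'def]; linarith)]
            rw [habs] at h; push_cast at h ⊢; rw [hv'def]; linarith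
          have h2 : |v' - v| ≤ δ := by
            rw [hv'def]; simp [abs_of_nonpos, hδpos.le, abs_of_nonneg]
          calc En φ dφ u ≤ 4^n * En φ dφ v' := ih u v' hu hv'1 h1
            _ ≤ 4^n * (4 * En φ dφ v) := by
                apply mul_le_mul_of_nonneg_left
                  (comp1 hK1 hφ hwi hdφ hKb hv'1 hv h2) (by positivity)
            _ = 4^(n+1) * En φ dφ v := by ring
        · set v' := v + δ with hv'def
          have habs : |u - v| = u - v := abs_of_nonneg (by linarith)
          have hgt : u - v > δ := by rw [habs] at hc; exact hc
          have hv'1 : 1 ≤ v' := by rw [hv'def]; linarith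
          have h1 : |u - v'| ≤ n * δ := by
            rw [abs_of_nonneg (by rw [hv'def]; linarith)]
            rw [habs] at h; push_cast at h ⊢; rw [hv'def]; linarith
          have h2 : |v' - v| ≤ δ := by
            rw [hv'def]; simp [abs_of_nonneg, hδpos.le]
          calc En φ dφ u ≤ 4^n * En φ dφ v' := ih u v' hu hv'1 h1
            _ ≤ 4^n * (4 * En φ dφ v) := by
                apply mul_le_mul_of_nonneg_left
                  (comp1 hK1 hφ hwi hdφ hKb hv'1 hv h2) (by positivity)
            _ = 4^(n+1) * En φ dφ v := by ring

lemma compB (hK1 : 1 ≤ K)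
    (hφ : ∀ ξ ≥ (1:ℝ), HasDerivAt φ (dφ ξ) ξ)
    (hwi : ∀ a ≥ (1:ℝ), ∀ b ≥ (1:ℝ), IntervalIntegrable w volume a b)
    (hdφ : ∀ ξ ≥ (1:ℝ), dφ ξ = dφ 1 + ∫ t in (1:ℝ)..ξ, w t)
    (hKb : ∀ᵐ ξ : ℝ, 1 ≤ ξ → |w ξ| ≤ K * |φ ξ|)
    {u v : ℝ} (hu : 1 ≤ u) (hv : 1 ≤ v) (huv : |u - v| ≤ 1) :
    En φ dφ u ≤ ((2:ℝ)^(⌈2*(1+2*K^2)⌉₊))^2 * En φ dφ v := by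
  set n := ⌈2*(1+2*K^2)⌉₊ with hndef
  have hKpos : (0:ℝ) < 1 + 2*K^2 := by nlinarith
  have hle : (2*(1+2*K^2) : ℝ) ≤ n := Nat.le_ceil _
  have h1 : (1:ℝ) ≤ n * (1/(2*(1+2*K^2))) := by
    rw [mul_one_div, le_div_iff₀ (by positivity), one_mul]
    exact hle
  have h2 := comp_n hK1 hφ hwi hdφ hKb n u v hu hv (huv.trans h1)
  have h3 : ((2:ℝ)^n)^2 = 4^n := by
    rw [← pow_mul, mul_comm, pow_mul]; norm_num
  rw [h3]; exact h2

set_option maxHeartbeats 1000000 in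
lemma local_low (hK1 : 1 ≤ K)
    (hφ : ∀ ξ ≥ (1:ℝ), HasDerivAt φ (dφ ξ) ξ)
    (hwi : ∀ a ≥ (1:ℝ), ∀ b ≥ (1:ℝ), IntervalIntegrable w volume a b)
    (hdφ : ∀ ξ ≥ (1:ℝ), dφ ξ = dφ 1 + ∫ t in (1:ℝ)..ξ, w t)
    (hKb : ∀ᵐ ξ : ℝ, 1 ≤ ξ → |w ξ| ≤ K * |φ ξ|)
    {x : ℝ} (hx : 1 ≤ x) :
    ((1/(8*(2+K)))^3 / (8 * (2:ℝ)^(⌈2*(1+2*K^2)⌉₊))) * En φ dφ x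
      ≤ ∫ t in x..(x+1/2), (φ t)^2 := by
  set β : ℝ := (2:ℝ)^(⌈2*(1+2*K^2)⌉₊) with hβdef
  set s : ℝ := 1/(8*(2+K)) with hsdef
  have hβ1 : (1:ℝ) ≤ β := one_le_pow₀ (by norm_num : (1:ℝ) ≤ 2)
  have hs0 : 0 < s := by rw [hsdef]; positivity
  have hs24 : s ≤ 1/24 := by
    rw [hsdef, div_le_div_iff₀ (by positivity) (by norm_num)]; linarith
  have hc0 : 0 < s^3 / (8*β) := by positivity
  -- integrability of φ² on [x, x+1/2]
  have hsub12 : Set.Icc x (x+1/2) ⊆ Set.Ici 1 := fun t ht => hx.trans ht.1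
  have hφc : ContinuousOn φ (Set.Icc x (x+1/2)) := contφ hφ hsub12
  have hφsq_int : IntervalIntegrable (fun t => (φ t)^2) volume x (x+1/2) := by
    apply ContinuousOn.intervalIntegrable
    rw [Set.uIcc_of_le (by linarith)]; exact hφc.pow 2
  rcases le_or_gt (En φ dφ x) 0 with hE0 | hEpos
  · have h1 : En φ dφ x = 0 := le_antisymm hE0 (En_nonneg x)
    rw [h1, mul_zero]
    exact intervalIntegral.integral_nonneg (by linarith) (fun t _ => sq_nonneg _)
  -- main case
  set r : ℝ := Real.sqrt (En φ dφ x) with hrdef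
  have hr0 : 0 < r := Real.sqrt_pos.mpr hEpos
  have hr2 : r^2 = En φ dφ x := Real.sq_sqrt hEpos.le
  -- dφ bound on [x, x+1/2]
  have hdb : ∀ t ∈ Set.Icc x (x+1/2), |dφ t| ≤ β * r := by
    intro t ht
    have h1 : En φ dφ t ≤ β^2 * En φ dφ x :=
      compB hK1 hφ hwi hdφ hKb (u := t) (v := x) (hsub12 ht) hx
        (by rw [abs_of_nonneg (by linarith [ht.1])]; linarith [ht.2])
    have h2 : (dφ t)^2 ≤ (β*r)^2 := by
      have : (dφ t)^2 ≤ En φ dφ t := le_add_of_nonneg_left (sq_nonneg _)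
      calc (dφ t)^2 ≤ β^2 * En φ dφ x := this.trans h1
        _ = (β*r)^2 := by rw [mul_pow, hr2]
    exact abs_le_of_sq_le_sq' h2 (by positivity)
  by_cases hex : ∃ t₀ ∈ Set.Icc x (x+1/4), s*r ≤ |φ t₀|
  · obtain ⟨t₀, ht₀, hst⟩ := hex
    set ρ : ℝ := s/(2*β) with hρdef
    have hρ0 : 0 < ρ := by positivity
    have hρ14 : ρ ≤ 1/4 := by
      rw [hρdef, div_le_div_iff₀ (by positivity) (by norm_num)]
      nlinarith
    have ht₀1 : 1 ≤ t₀ := hx.trans ht₀.1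
    -- pointwise lower bound on [t₀, t₀+ρ]
    have hlow : ∀ t ∈ Set.Icc t₀ (t₀+ρ), (s*r/2)^2 ≤ (φ t)^2 := by
      intro t ht
      have ht1 : 1 ≤ t := ht₀1.trans ht.1
      have hsubt : Set.Icc t₀ t ⊆ Set.Icc x (x+1/2) := by
        apply Set.Icc_subset_Icc ht₀.1
        linarith [ht.2, ht₀.2]
      have hint : ∫ u in t₀..t, dφ u = φ t - φ t₀ := ftcφ hφ hwi hdφ ht₀1 ht1
      have hbound : |φ t - φ t₀| ≤ s*r/2 := by
        rw [← hint]
        have hdc : ContinuousOn dφ (Set.Icc t₀ t) := contdφ hwi hdφ ht₀1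
        have hdi : IntervalIntegrable dφ volume t₀ t := by
          apply ContinuousOn.intervalIntegrable
          rw [Set.uIcc_of_le ht.1]; exact hdc
        calc |∫ u in t₀..t, dφ u| ≤ ∫ u in t₀..t, |dφ u| :=
              intervalIntegral.abs_integral_le_integral_abs ht.1
          _ ≤ ∫ u in t₀..t, β*r := by
              apply intervalIntegral.integral_mono_on ht.1 hdi.abs intervalIntegrable_const
              exact fun u hu => hdb u (hsubt hu)
          _ = (t - t₀) * (β*r) := by rw [intervalIntegral.integral_const, smul_eq_mul]
          _ ≤ ρ * (β*r) := by
              apply mul_le_mul_of_nonneg_right (by linarith [ht.2]) (by positivity)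
          _ = s*r/2 := by rw [hρdef]; field_simp
      have habs : s*r/2 ≤ |φ t| := by
        have h1 : |φ t₀| - |φ t - φ t₀| ≤ |φ t| := by
          have := abs_sub_abs_le_abs_sub (φ t₀) (φ t)
          rw [abs_sub_comm] at this
          linarith
        linarith
      calc (s*r/2)^2 ≤ |φ t|^2 := by
            apply pow_le_pow_left₀ (by positivity) habs
        _ = (φ t)^2 := sq_abs _
    -- integrate
    have hsub2 : ∫ u in t₀..(t₀+ρ), (s*r/2)^2 ≤ ∫ u in t₀..(t₀+ρ), (φ u)^2 := by
      apply intervalIntegral.integral_mono_on (by linarith) intervalIntegrable_const _ hlow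
      apply hφsq_int.mono_set
      rw [Set.uIcc_of_le (by linarith), Set.uIcc_of_le (by linarith : x ≤ x+1/2)]
      apply Set.Icc_subset_Icc ht₀.1; linarith [ht₀.2]
    have hsub3 : ∫ u in t₀..(t₀+ρ), (φ u)^2 ≤ ∫ t in x..(x+1/2), (φ t)^2 := by
      apply intervalIntegral.integral_mono_interval ht₀.1 (by linarith) (by linarith [ht₀.2])
      · exact ae_of_all _ (fun t => sq_nonneg _)
      · exact hφsq_int
    have heval : ∫ u in t₀..(t₀+ρ), (s*r/2)^2 = ρ * (s*r/2)^2 := by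
      rw [intervalIntegral.integral_const, smul_eq_mul]; ring_nf
    have hfin : (s^3/(8*β)) * En φ dφ x = ρ * (s*r/2)^2 := by
      rw [hρdef, ← hr2]; field_simp; ring
    calc (s^3/(8*β)) * En φ dφ x = ρ * (s*r/2)^2 := hfin
      _ = ∫ u in t₀..(t₀+ρ), (s*r/2)^2 := heval.symm
      _ ≤ ∫ u in t₀..(t₀+ρ), (φ u)^2 := hsub2
      _ ≤ ∫ t in x..(x+1/2), (φ t)^2 := hsub3
  · -- contradiction case
    exfalso
    push_neg at hex
    have hφx : |φ x| < s*r := hex x ⟨le_refl x, by linarith⟩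
    have hdφx : (2/3)*r ≤ |dφ x| := by
      have h1 : (φ x)^2 < s^2*r^2 := by
        have := pow_lt_pow_left₀ hφx (abs_nonneg _) (by norm_num : 2 ≠ 0)
        rw [sq_abs] at this; nlinarith [this]
      have h2 : ((2/3)*r)^2 ≤ (dφ x)^2 := by
        have hEx : (φ x)^2 + (dφ x)^2 = r^2 := by rw [hr2]; rfl
        have hs2 : s^2 ≤ (1/24)^2 := pow_le_pow_left₀ hs0.le hs24 2
        nlinarith [h1, mul_le_mul_of_nonneg_right hs2 (sq_nonneg r)]
      exact le_abs_of_sq_le_sq h2 (by positivity)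
    -- dφ deviation bound on [x, x+1/4]
    have hdev : ∀ t ∈ Set.Icc x (x+1/4), |dφ t - dφ x| ≤ K*s*r/4 := by
      intro t ht
      have ht1 : 1 ≤ t := hx.trans ht.1
      have h1 : dφ t - dφ x = ∫ u in x..t, w u := dφ_sub hwi hdφ hx ht1
      have hsubt : Set.Icc x t ⊆ Set.Icc x (x+1/4) := Set.Icc_subset_Icc le_rfl ht.2
      have hφi : IntervalIntegrable (fun u => |φ u|) volume x t := by
        apply ContinuousOn.intervalIntegrable
        rw [Set.uIcc_of_le ht.1]
        exact (contφ hφ (fun u hu => hx.trans hu.1)).abs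
      rw [h1]
      calc |∫ u in x..t, w u| ≤ ∫ u in x..t, |w u| :=
            intervalIntegral.abs_integral_le_integral_abs ht.1
        _ ≤ K * ∫ u in x..t, |φ u| := intw hφ hwi hKb hx ht.1
        _ ≤ K * ∫ u in x..t, s*r := by
            apply mul_le_mul_of_nonneg_left _ (by linarith)
            apply intervalIntegral.integral_mono_on ht.1 hφi intervalIntegrable_const
            exact fun u hu => (hex u (hsubt hu)).le
        _ = K * ((t - x) * (s*r)) := by rw [intervalIntegral.integral_const, smul_eq_mul]
        _ ≤ K * ((1/4) * (s*r)) := by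
            apply mul_le_mul_of_nonneg_left
              (mul_le_mul_of_nonneg_right (by linarith [ht.2]) (by positivity)) (by linarith)
        _ = K*s*r/4 := by ring
    -- integral identity
    have hid : ∫ u in x..(x+1/4), dφ u = φ (x+1/4) - φ x := ftcφ hφ hwi hdφ hx (by linarith)
    have hdc : ContinuousOn dφ (Set.Icc x (x+1/4)) := contdφ hwi hdφ hx
    have hdi : IntervalIntegrable dφ volume x (x+1/4) := by
      apply ContinuousOn.intervalIntegrable
      rw [Set.uIcc_of_le (by linarith)]; exact hdc
    have hsplit : ∫ u in x..(x+1/4), (dφ u - dφ x) =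
        (∫ u in x..(x+1/4), dφ u) - (1/4) * dφ x := by
      rw [intervalIntegral.integral_sub hdi intervalIntegrable_const,
        intervalIntegral.integral_const, smul_eq_mul]
      ring
    have hdevint : |∫ u in x..(x+1/4), (dφ u - dφ x)| ≤ (1/4) * (K*s*r/4) := by
      calc |∫ u in x..(x+1/4), (dφ u - dφ x)| ≤ ∫ u in x..(x+1/4), |dφ u - dφ x| :=
            intervalIntegral.abs_integral_le_integral_abs (by linarith)
        _ ≤ ∫ u in x..(x+1/4), K*s*r/4 := by
            apply intervalIntegral.integral_mono_on (by linarith)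
              (hdi.sub intervalIntegrable_const).abs intervalIntegrable_const hdev
        _ = (1/4) * (K*s*r/4) := by
            rw [intervalIntegral.integral_const, smul_eq_mul]; ring_nf
    -- lower bound for |φ(x+1/4) - φ x|
    have hlow2 : (1/4)*|dφ x| - (1/4)*(K*s*r/4) ≤ |φ (x+1/4) - φ x| := by
      have h1 : φ (x+1/4) - φ x = (1/4) * dφ x + ∫ u in x..(x+1/4), (dφ u - dφ x) := by
        rw [hsplit, hid]; ring
      rw [h1]
      have h2 := abs_add_le ((1/4) * dφ x + ∫ u in x..(x+1/4), (dφ u - dφ x))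
        (-(∫ u in x..(x+1/4), (dφ u - dφ x)))
      simp only [add_neg_cancel_right, abs_neg] at h2
      have h3 : |(1/4 : ℝ) * dφ x| = (1/4)*|dφ x| := by rw [abs_mul]; norm_num
      linarith [hdevint, h2, h3.symm.le, h3.le]
    have hup : |φ (x+1/4) - φ x| < 2*s*r := by
      have h1 : |φ (x+1/4)| < s*r := hex _ ⟨by linarith, le_refl _⟩
      calc |φ (x+1/4) - φ x| ≤ |φ (x+1/4)| + |φ x| := abs_sub _ _
        _ < 2*s*r := by linarith
    -- contradiction
    have hkey : s*(2 + K/16) ≤ 1/8 := by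
      rw [hsdef]; rw [div_mul_eq_mul_div, div_le_div_iff₀ (by positivity) (by norm_num)]
      nlinarith
    nlinarith [mul_le_mul_of_nonneg_right hkey hr0.le, hr0, hs0, hdφx, hlow2, hup]

lemma intvl (hK1 : 1 ≤ K)
    (hφ : ∀ ξ ≥ (1:ℝ), HasDerivAt φ (dφ ξ) ξ)
    (hwi : ∀ a ≥ (1:ℝ), ∀ b ≥ (1:ℝ), IntervalIntegrable w volume a b)
    (hdφ : ∀ ξ ≥ (1:ℝ), dφ ξ = dφ 1 + ∫ t in (1:ℝ)..ξ, w t)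
    (hKb : ∀ᵐ ξ : ℝ, 1 ≤ ξ → |w ξ| ≤ K * |φ ξ|)
    {a : ℝ} (ha : 1 ≤ a) :
    ∫ t in a..(a+1/2), En φ dφ t ≤
      (4 * ((2:ℝ)^(⌈2*(1+2*K^2)⌉₊))^3 / ((1/(8*(2+K)))^3)) * ∫ t in a..(a+1/2), (φ t)^2 := by
  set β : ℝ := (2:ℝ)^(⌈2*(1+2*K^2)⌉₊) with hβdef
  set s : ℝ := 1/(8*(2+K)) with hsdef
  have hβ0 : 0 < β := by rw [hβdef]; positivity
  have hs0 : 0 < s := by rw [hsdef]; positivity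
  have hc0 : (0:ℝ) < s^3/(8*β) := by positivity
  have h1 : ∀ t ∈ Set.Icc a (a+1/2), En φ dφ t ≤ β^2 * En φ dφ a := by
    intro t ht
    exact compB hK1 hφ hwi hdφ hKb (u := t) (v := a) (ha.trans ht.1) ha
      (by rw [abs_of_nonneg (by linarith [ht.1])]; linarith [ht.2])
  have h2 : ∫ t in a..(a+1/2), En φ dφ t ≤ (1/2) * (β^2 * En φ dφ a) := by
    calc ∫ t in a..(a+1/2), En φ dφ t ≤ ∫ _t in a..(a+1/2), β^2 * En φ dφ a :=
          intervalIntegral.integral_mono_on (by linarith)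
            (intEn hφ hwi hdφ ha (by linarith)) intervalIntegrable_const h1
      _ = (1/2) * (β^2 * En φ dφ a) := by
          rw [intervalIntegral.integral_const, smul_eq_mul]; ring_nf
  have h3 : (s^3/(8*β)) * En φ dφ a ≤ ∫ t in a..(a+1/2), (φ t)^2 :=
    local_low hK1 hφ hwi hdφ hKb ha
  have hD0 : (0:ℝ) ≤ 4*β^3/(s^3) := by positivity
  have heq : (1/2) * (β^2 * En φ dφ a) = (4*β^3/(s^3)) * ((s^3/(8*β)) * En φ dφ a) := by
    field_simp; ring
  calc ∫ t in a..(a+1/2), En φ dφ t ≤ (1/2) * (β^2 * En φ dφ a) := h2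
    _ = (4*β^3/(s^3)) * ((s^3/(8*β)) * En φ dφ a) := heq
    _ ≤ (4*β^3/(s^3)) * ∫ t in a..(a+1/2), (φ t)^2 := mul_le_mul_of_nonneg_left h3 hD0

lemma glob (hK1 : 1 ≤ K)
    (hφ : ∀ ξ ≥ (1:ℝ), HasDerivAt φ (dφ ξ) ξ)
    (hwi : ∀ a ≥ (1:ℝ), ∀ b ≥ (1:ℝ), IntervalIntegrable w volume a b)
    (hdφ : ∀ ξ ≥ (1:ℝ), dφ ξ = dφ 1 + ∫ t in (1:ℝ)..ξ, w t)
    (hKb : ∀ᵐ ξ : ℝ, 1 ≤ ξ → |w ξ| ≤ K * |φ ξ|) : ∀ n : ℕ,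
    ∫ t in (1:ℝ)..(1 + n/2 : ℝ), En φ dφ t ≤
      (4 * ((2:ℝ)^(⌈2*(1+2*K^2)⌉₊))^3 / ((1/(8*(2+K)))^3)) *
        ∫ t in (1:ℝ)..(1 + n/2 : ℝ), (φ t)^2 := by
  intro n
  induction n with
  | zero => norm_num
  | succ n ih =>
      have hb1 : (1:ℝ) ≤ 1 + (n:ℝ)/2 := by
        have : (0:ℝ) ≤ (n:ℝ)/2 := by positivity
        linarith
      have hb2 : (1:ℝ) ≤ 1 + (n:ℝ)/2 + 1/2 := by linarith
      have hcast : (1 + (n+1 : ℕ)/2 : ℝ) = (1 + n/2) + 1/2 := by push_cast; ring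
      rw [hcast]
      have hsplitE : ∫ t in (1:ℝ)..(1 + n/2 + 1/2), En φ dφ t =
          (∫ t in (1:ℝ)..(1 + n/2), En φ dφ t) +
          ∫ t in (1 + n/2 : ℝ)..(1 + n/2 + 1/2), En φ dφ t :=
        (intervalIntegral.integral_add_adjacent_intervals
          (intEn hφ hwi hdφ le_rfl hb1) (intEn hφ hwi hdφ hb1 (by linarith))).symm
      have hsplitφ : ∫ t in (1:ℝ)..(1 + n/2 + 1/2), (φ t)^2 =
          (∫ t in (1:ℝ)..(1 + n/2), (φ t)^2) +
          ∫ t in (1 + n/2 : ℝ)..(1 + n/2 + 1/2), (φ t)^2 :=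
        (intervalIntegral.integral_add_adjacent_intervals
          (intφsq hφ le_rfl hb1) (intφsq hφ hb1 (by linarith))).symm
      have hstep := intvl hK1 hφ hwi hdφ hKb hb1
      rw [hsplitE, hsplitφ, mul_add]
      exact add_le_add ih hstep

end Stmt15Aux

open Stmt15Aux in
/-- Elliptic-regularity type bound: for a bounded potential `W` (`|W| ≤ M` on `[1,∞)`),
there is a constant `C = C(M)` such that every solution `φ` of `-φ'' + W φ = φ` on `[1,∞)`
(continuously differentiable with locally absolutely continuous derivative `dφ`, second
derivative `w`) satisfies `∫₁^L φ² ≤ ∫₁^L (φ² + φ'²) ≤ C ∫₁^L φ²` for every `L ≥ 2`. -/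
theorem stmt_15 (M : ℝ) (hM : 0 < M) :
    ∃ C : ℝ, ∀ W φ dφ w : ℝ → ℝ,
      Measurable W → (∀ ξ ≥ (1:ℝ), |W ξ| ≤ M) →
      (∀ ξ ≥ (1:ℝ), HasDerivAt φ (dφ ξ) ξ) →
      (∀ a ≥ (1:ℝ), ∀ b ≥ (1:ℝ), IntervalIntegrable w volume a b) →
      (∀ ξ ≥ (1:ℝ), dφ ξ = dφ 1 + ∫ t in (1:ℝ)..ξ, w t) →
      (∀ᵐ ξ : ℝ, 1 ≤ ξ → -(w ξ) + W ξ * φ ξ = φ ξ) →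
      ∀ L ≥ (2:ℝ),
        (∫ ξ in (1:ℝ)..L, (φ ξ)^2) ≤ (∫ ξ in (1:ℝ)..L, ((φ ξ)^2 + (dφ ξ)^2)) ∧
        (∫ ξ in (1:ℝ)..L, ((φ ξ)^2 + (dφ ξ)^2)) ≤ C * ∫ ξ in (1:ℝ)..L, (φ ξ)^2 := by
  refine ⟨2 * (4 * ((2:ℝ)^(⌈2*(1+2*(M+1)^2)⌉₊))^3 / ((1/(8*(2+(M+1))))^3)), ?_⟩
  intro W φ dφ w hWm hWb hφ hwi hdφ hae L hL
  have hK1 : (1:ℝ) ≤ M + 1 := by linarith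
  have hKb : ∀ᵐ ξ : ℝ, 1 ≤ ξ → |w ξ| ≤ (M+1) * |φ ξ| := by
    filter_upwards [hae] with ξ h hξ
    have heq := h hξ
    have hWξ := hWb ξ hξ
    have hwξ : w ξ = W ξ * φ ξ - φ ξ := by linarith
    rw [hwξ]
    calc |W ξ * φ ξ - φ ξ| ≤ |W ξ * φ ξ| + |φ ξ| := abs_sub _ _
      _ = |W ξ| * |φ ξ| + |φ ξ| := by rw [abs_mul]
      _ ≤ M*|φ ξ| + |φ ξ| := by
          have := mul_le_mul_of_nonneg_right hWξ (abs_nonneg (φ ξ))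
          linarith
      _ = (M+1)*|φ ξ| := by ring
  have hL1 : (1:ℝ) ≤ L := by linarith
  have hEq : (∫ ξ in (1:ℝ)..L, ((φ ξ)^2 + (dφ ξ)^2)) = ∫ ξ in (1:ℝ)..L, En φ dφ ξ := rfl
  constructor
  · rw [hEq]
    apply intervalIntegral.integral_mono_on hL1 (intφsq hφ le_rfl hL1)
      (intEn hφ hwi hdφ le_rfl hL1)
    intro t _
    exact le_add_of_nonneg_right (sq_nonneg _)
  · rw [hEq]
    set D : ℝ := 4 * ((2:ℝ)^(⌈2*(1+2*(M+1)^2)⌉₊))^3 / ((1/(8*(2+(M+1))))^3) with hDdef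
    have hD0 : 0 ≤ D := by rw [hDdef]; positivity
    set n : ℕ := ⌊2*(L-1)⌋₊ with hndef
    have hn2 : (n:ℝ) ≤ 2*(L-1) := Nat.floor_le (by linarith)
    have hn3 : 2*(L-1) < (n:ℝ) + 1 := Nat.lt_floor_add_one _
    set b : ℝ := 1 + n/2 with hbdef
    have hb1 : (1:ℝ) ≤ b := by
      rw [hbdef]; have : (0:ℝ) ≤ (n:ℝ)/2 := by positivity
      linarith
    have hbL : b ≤ L := by rw [hbdef]; linarith
    have hLb : L ≤ b + 1/2 := by rw [hbdef]; linarith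
    have hL12 : (1:ℝ) ≤ L - 1/2 := by linarith
    have hsplitE : ∫ ξ in (1:ℝ)..L, En φ dφ ξ =
        (∫ ξ in (1:ℝ)..b, En φ dφ ξ) + ∫ ξ in b..L, En φ dφ ξ :=
      (intervalIntegral.integral_add_adjacent_intervals
        (intEn hφ hwi hdφ le_rfl hb1) (intEn hφ hwi hdφ hb1 hbL)).symm
    have h1 : ∫ ξ in (1:ℝ)..b, En φ dφ ξ ≤ D * ∫ ξ in (1:ℝ)..b, (φ ξ)^2 := by
      rw [hbdef, hDdef]
      exact glob hK1 hφ hwi hdφ hKb n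
    have hsplit2 : ∫ ξ in (L-1/2)..L, En φ dφ ξ =
        (∫ ξ in (L-1/2)..b, En φ dφ ξ) + ∫ ξ in b..L, En φ dφ ξ :=
      (intervalIntegral.integral_add_adjacent_intervals
        (intEn hφ hwi hdφ hL12 (by linarith)) (intEn hφ hwi hdφ hb1 hbL)).symm
    have h2 : ∫ ξ in b..L, En φ dφ ξ ≤ ∫ ξ in (L-1/2)..L, En φ dφ ξ := by
      have hpos : 0 ≤ ∫ ξ in (L-1/2)..b, En φ dφ ξ :=
        intervalIntegral.integral_nonneg (by linarith) (fun u _ => En_nonneg u)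
      linarith [hsplit2]
    have h3 : ∫ ξ in (L-1/2)..L, En φ dφ ξ ≤ D * ∫ ξ in (L-1/2)..L, (φ ξ)^2 := by
      have hthis := intvl hK1 hφ hwi hdφ hKb (a := L - 1/2) hL12
      have hLL : L - 1/2 + 1/2 = L := by ring
      rw [hLL] at hthis
      rw [hDdef]
      exact hthis
    have h4 : ∫ ξ in (L-1/2)..L, (φ ξ)^2 ≤ ∫ ξ in (1:ℝ)..L, (φ ξ)^2 := by
      apply intervalIntegral.integral_mono_interval hL12 (by linarith) le_rfl
        (ae_of_all _ (fun t => sq_nonneg _)) (intφsq hφ le_rfl hL1)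
    have h5 : ∫ ξ in (1:ℝ)..b, (φ ξ)^2 ≤ ∫ ξ in (1:ℝ)..L, (φ ξ)^2 := by
      apply intervalIntegral.integral_mono_interval le_rfl hb1 hbL
        (ae_of_all _ (fun t => sq_nonneg _)) (intφsq hφ le_rfl hL1)
    calc ∫ ξ in (1:ℝ)..L, En φ dφ ξ
        = (∫ ξ in (1:ℝ)..b, En φ dφ ξ) + ∫ ξ in b..L, En φ dφ ξ := hsplitE
      _ ≤ D * (∫ ξ in (1:ℝ)..b, (φ ξ)^2) + D * ∫ ξ in (L-1/2)..L, (φ ξ)^2 := by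
          have := h2.trans h3
          linarith
      _ ≤ D * (∫ ξ in (1:ℝ)..L, (φ ξ)^2) + D * ∫ ξ in (1:ℝ)..L, (φ ξ)^2 :=
          add_le_add (mul_le_mul_of_nonneg_left h5 hD0) (mul_le_mul_of_nonneg_left h4 hD0)
      _ = 2 * D * ∫ ξ in (1:ℝ)..L, (φ ξ)^2 := by ring
end
end
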